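/- arXiv:2105.09241 — 7 statements merged into one kernel-verified Lean document; each statement's English description precedes it below -/
import Mathlib

section
/- Assume f satisfies the relative smoothness condition with constants μ_d(f) and L_d(f), let L ≥ L_d(f), let x̄ ∈ int(dom ψ) be one of the points z_1, …, z_m ∈ dom ψ, let δ ≥ 0, let λ̄ ∈ Δ_m satisfy ⟨λ̄ − λ, f_* − Gᵀ x_+⟩ ≤ δ for all λ ∈ Δ_m, where x_+ = y*_L(L∇d(x̄) − Gλ̄). Then for every y ∈ dom ψ: β_d(x_+, y) ≤ β_d(x̄, y) + (1/L)[F(y) − F(x_+) + δ], where F = f + ψ. -/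
open Filter Set Topology

/-- Gradient inequality for convex functions. -/
lemma gmm_grad_ineq {E : Type*} [NormedAddCommGroup E] [NormedSpace ℝ E]
    {s : Set E} {f : E → ℝ} {f' : E →L[ℝ] ℝ} {x y : E}
    (hf : ConvexOn ℝ s f) (hx : x ∈ s) (hy : y ∈ s)
    (hd : HasFDerivAt f f' x) : f x + f' (y - x) ≤ f y := by
  have h1 : HasDerivAt (fun t : ℝ => x + t • (y - x)) (y - x) 0 := by
    simpa using ((hasDerivAt_id (0:ℝ)).smul_const (y - x)).const_add x
  have hd0 : HasFDerivAt f f' (x + (0:ℝ) • (y - x)) := by simpa using hd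
  have hg : HasDerivAt (fun t : ℝ => f (x + t • (y - x))) (f' (y - x)) 0 :=
    hd0.comp_hasDerivAt 0 h1
  have key : Tendsto (slope (fun t : ℝ => f (x + t • (y - x))) 0) (𝓝[>] 0) (𝓝 (f' (y - x))) :=
    (hasDerivAt_iff_tendsto_slope.mp hg).mono_left
      (nhdsWithin_mono _ (fun t ht => ht.ne'))
  have hev : ∀ᶠ t in 𝓝[>] (0:ℝ),
      slope (fun t : ℝ => f (x + t • (y - x))) 0 t ≤ f y - f x := by
    filter_upwards [Ioo_mem_nhdsGT_of_mem (Set.left_mem_Ico.mpr one_pos)] with t ht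
    have hconv := hf.2 hx hy (by linarith [ht.2] : (0:ℝ) ≤ 1 - t) (le_of_lt ht.1) (by ring)
    simp only [smul_eq_mul] at hconv
    have hxt : x + t • (y - x) = (1 - t) • x + t • y := by
      module
    rw [slope_def_field]
    rw [div_le_iff₀ (by linarith [ht.1] : (0:ℝ) < t - 0)]
    simp only [zero_smul, add_zero, hxt]
    calc f ((1 - t) • x + t • y) - f x ≤ (1 - t) * f x + t * f y - f x := by linarith
      _ = (f y - f x) * (t - 0) := by ring
  have := le_of_tendsto key hev
  linarith

/-- If `g` has derivative `c` at `0` and `g 0 ≤ g t` on `[0,1]`, then `0 ≤ c`. -/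
lemma gmm_deriv_nonneg {g : ℝ → ℝ} {c : ℝ} (hg : HasDerivAt g c 0)
    (hmin : ∀ t ∈ Set.Icc (0:ℝ) 1, g 0 ≤ g t) : 0 ≤ c := by
  have key : Tendsto (slope g 0) (𝓝[>] 0) (𝓝 c) :=
    (hasDerivAt_iff_tendsto_slope.mp hg).mono_left
      (nhdsWithin_mono _ (fun t ht => ht.ne'))
  refine ge_of_tendsto key ?_
  filter_upwards [Ioo_mem_nhdsGT_of_mem (Set.left_mem_Ico.mpr one_pos)] with t ht
  rw [slope_def_field]
  have := hmin t ⟨le_of_lt ht.1, le_of_lt ht.2⟩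
  exact div_nonneg (by linarith) (by linarith [ht.1])



set_option maxHeartbeats 800000 in
/-- Theorem `th-Step`, item 1, of "Gradient Methods with Memory".

One step of the Inexact Gradient Method with Memory with `L ≥ L_d(f)`:
for every `y ∈ dom ψ`, `β_d(x₊, y) ≤ β_d(x̄, y) + (1/L)[F(y) − F(x₊) + δ]`. -/
theorem gmm_th_Step_item1
    {E : Type*} [NormedAddCommGroup E] [NormedSpace ℝ E] [FiniteDimensional ℝ E]
    -- `Sd = dom d`, `U = dom f` (open), `S = dom ψ`
    (Sd U S : Set E) (hSU : S ⊆ U) (hUSd : U ⊆ Sd) (hUopen : IsOpen U) (hSconv : Convex ℝ S)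
    (d f ψ : E → ℝ) (d' f' : E → E →L[ℝ] ℝ)
    (hdconv : StrictConvexOn ℝ Sd d)
    (hd' : ∀ x ∈ interior Sd, HasFDerivAt d (d' x) x)
    (hf' : ∀ x ∈ U, HasFDerivAt f (f' x) x)
    (hfconv : ConvexOn ℝ U f)
    (hψconv : ConvexOn ℝ S ψ)
    -- Bregman distance of `d`
    (β : E → E → ℝ) (hβ : ∀ x y, β x y = d y - d x - (d' x) (y - x))
    -- relative smoothness of `f` with constants `0 ≤ μ_d(f) ≤ L_d(f)`
    (μ Lf : ℝ) (hμ0 : 0 ≤ μ) (hμLf : μ ≤ Lf)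
    (hsmooth : ∀ x ∈ U, ∀ y ∈ U,
      μ * β x y ≤ f y - f x - (f' x) (y - x) ∧ f y - f x - (f' x) (y - x) ≤ Lf * β x y)
    (L δ : ℝ) (hL0 : 0 < L) (hL : Lf ≤ L) (hδ : 0 ≤ δ)
    -- the bundle `z₁, …, z_m ∈ dom ψ`, containing `x̄ ∈ int(dom ψ)`
    (m : ℕ) (hm : 0 < m) (z : Fin m → E) (hzS : ∀ i, z i ∈ S)
    (xbar : E) (hxbar : xbar ∈ interior S) (j : Fin m) (hj : z j = xbar)
    (lam : Fin m → ℝ) (hlam : lam ∈ stdSimplex ℝ (Fin m))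
    -- `x₊ = y*_L(L∇d(x̄) − Gλ̄)`
    (xplus : E) (hxpS : xplus ∈ S) (hxpint : xplus ∈ interior Sd)
    (hxp : ∀ y ∈ S,
      (L • d' xbar - ∑ i, lam i • f' (z i)) y - L * d y - ψ y ≤
      (L • d' xbar - ∑ i, lam i • f' (z i)) xplus - L * d xplus - ψ xplus)
    -- approximate stationarity: `⟨λ̄ − λ, f_* − Gᵀ x₊⟩ ≤ δ` for all `λ ∈ Δ_m`
    (hstat : ∀ ν ∈ stdSimplex ℝ (Fin m),
      ∑ i, (lam i - ν i) * ((f' (z i)) (z i) - f (z i) - (f' (z i)) xplus) ≤ δ) :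
    ∀ y ∈ S,
      β xplus y ≤ β xbar y + (1 / L) * ((f y + ψ y) - (f xplus + ψ xplus) + δ) := by

  intro y hy
  have hxS : xbar ∈ S := interior_subset hxbar
  have hxU : xbar ∈ U := hSU hxS
  have hxpU : xplus ∈ U := hSU hxpS
  have hSSd : S ⊆ Sd := fun a ha => hUSd (hSU ha)
  have hxbarInt : xbar ∈ interior Sd := interior_mono hSSd hxbar
  have dconv : ConvexOn ℝ Sd d := hdconv.convexOn
  set A : E →L[ℝ] ℝ := d' xbar with hA
  set B : E →L[ℝ] ℝ := d' xplus with hB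
  -- (I3) nonnegativity of β xbar xplus
  have I3 : 0 ≤ β xbar xplus := by
    have h := gmm_grad_ineq dconv (hSSd hxS) (hSSd hxpS) (hd' xbar hxbarInt)
    rw [hβ]; linarith
  -- (I2) three-point identity
  have I2 : β xbar y - β xplus y - β xbar xplus = B (y - xplus) - A (y - xplus) := by
    simp only [hβ, map_sub]; ring
  -- (I1) first-order optimality at xplus
  set c0 : ℝ := -(L * A (y - xplus)) + (∑ i, lam i * (f' (z i)) (y - xplus))
      + (ψ y - ψ xplus) with hc0
  have I1 : 0 ≤ L * B (y - xplus) + c0 := by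
    set g : ℝ → ℝ := fun t => L * d (xplus + t • (y - xplus)) + t * c0 with hg
    have hd0 : HasFDerivAt d B (xplus + (0:ℝ) • (y - xplus)) := by
      simpa using hd' xplus hxpint
    have h1 : HasDerivAt (fun t : ℝ => xplus + t • (y - xplus)) (y - xplus) 0 := by
      simpa using ((hasDerivAt_id (0:ℝ)).smul_const (y - xplus)).const_add xplus
    have hgd : HasDerivAt g (L * B (y - xplus) + c0) 0 := by
      have h2 := (hd0.comp_hasDerivAt 0 h1).const_mul L
      have h3 : HasDerivAt (fun t : ℝ => t * c0) c0 0 := by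
        simpa using (hasDerivAt_id (0:ℝ)).mul_const c0
      exact h2.add h3
    refine gmm_deriv_nonneg hgd ?_
    intro t ht
    set xt : E := xplus + t • (y - xplus) with hxt
    have hxtS : xt ∈ S := by
      have : xt = (1 - t) • xplus + t • y := by rw [hxt]; module
      rw [this]
      exact hSconv hxpS hy (by linarith [ht.2]) ht.1 (by ring)
    have hopt := hxp xt hxtS
    have hψt : ψ xt ≤ (1 - t) * ψ xplus + t * ψ y := by
      have : xt = (1 - t) • xplus + t • y := by rw [hxt]; module
      rw [this]
      have := hψconv.2 hxpS hy (by linarith [ht.2] : (0:ℝ) ≤ 1 - t) ht.1 (by ring)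
      simpa using this
    simp only [ContinuousLinearMap.sub_apply, ContinuousLinearMap.smul_apply,
      ContinuousLinearMap.sum_apply, smul_eq_mul] at hopt
    have hAxt : A xt = A xplus + t * A (y - xplus) := by
      rw [hxt]; simp [map_add, map_smul]
    have hsum : ∑ i, lam i * (f' (z i)) xt
        = (∑ i, lam i * (f' (z i)) xplus) + t * (∑ i, lam i * (f' (z i)) (y - xplus)) := by
      rw [Finset.mul_sum, ← Finset.sum_add_distrib]
      refine Finset.sum_congr rfl fun i _ => ?_
      rw [hxt]; simp [map_add, map_smul]; ring
    have hg0 : g 0 = L * d xplus := by simp [hg]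
    have hgt : g t = L * d xt + t * c0 := by rw [hg]
    rw [hg0, hgt, hc0]
    rw [hAxt, hsum] at hopt
    linarith [hopt, hψt]
  -- (I4) relative smoothness upper bound
  have I4 : f xplus - f xbar - (f' xbar) (xplus - xbar) ≤ Lf * β xbar xplus :=
    (hsmooth xbar hxU xplus hxpU).2
  -- (I5) approximate stationarity with ν = e_j
  set w : Fin m → ℝ := fun i => (f' (z i)) (z i) - f (z i) - (f' (z i)) xplus with hw
  have I5 : (∑ i, lam i * w i) - w j ≤ δ := by
    have hν : (fun i => if i = j then (1:ℝ) else 0) ∈ stdSimplex ℝ (Fin m) := by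
      constructor
      · intro i; dsimp only; split <;> norm_num
      · simp
    have h := hstat _ hν
    have heq : ∑ i, (lam i - if i = j then (1:ℝ) else 0) * w i
        = (∑ i, lam i * w i) - w j := by
      simp only [sub_mul, Finset.sum_sub_distrib, ite_mul, one_mul, zero_mul]
      rw [Finset.sum_ite_eq' Finset.univ j w]
      simp
    rw [← heq]
    exact h
  -- (I6) convexity lower bound of the model
  have I6 : ∑ i, lam i * (f (z i) + (f' (z i)) (y - z i)) ≤ f y := by
    have h1 : ∀ i, f (z i) + (f' (z i)) (y - z i) ≤ f y := fun i =>
      gmm_grad_ineq hfconv (hSU (hzS i)) (hSU hy) (hf' _ (hSU (hzS i)))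
    calc ∑ i, lam i * (f (z i) + (f' (z i)) (y - z i))
        ≤ ∑ i, lam i * f y :=
          Finset.sum_le_sum fun i _ => mul_le_mul_of_nonneg_left (h1 i) (hlam.1 i)
      _ = f y := by rw [← Finset.sum_mul, hlam.2, one_mul]
  -- sum identity
  have hsid : (∑ i, lam i * (f' (z i)) (y - xplus)) - (∑ i, lam i * w i)
      = ∑ i, lam i * (f (z i) + (f' (z i)) (y - z i)) := by
    rw [← Finset.sum_sub_distrib]
    refine Finset.sum_congr rfl fun i _ => ?_
    simp only [hw, map_sub]; ring
  -- assemble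
  have hwj : w j = (f' xbar) xbar - f xbar - (f' xbar) xplus := by
    simp only [hw, hj, map_sub]
  have e1 : (f' xbar) (xplus - xbar) = (f' xbar) xplus - (f' xbar) xbar := map_sub _ _ _
  have I2L : L * B (y - xplus) - L * A (y - xplus)
      = L * β xbar y - L * β xplus y - L * β xbar xplus := by
    have := I2; nlinarith [I2]
  have t1 : L * β xplus y ≤ L * β xbar y - L * β xbar xplus
      + (∑ i, lam i * (f' (z i)) (y - xplus)) + ψ y - ψ xplus := by
    rw [hc0] at I1; linarith [I1, I2L]
  have hLfL : Lf * β xbar xplus ≤ L * β xbar xplus :=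
    mul_le_mul_of_nonneg_right hL I3
  have t2 : f xplus ≤ δ - (∑ i, lam i * w i) + L * β xbar xplus := by
    linarith [I4, I5, hwj, e1, hLfL]
  have key : L * β xplus y ≤ L * β xbar y + ((f y + ψ y) - (f xplus + ψ xplus) + δ) := by
    linarith [t1, t2, hsid, I6]
  have h2 : β xplus y - β xbar y ≤ (1 / L) * ((f y + ψ y) - (f xplus + ψ xplus) + δ) := by
    rw [one_div, inv_mul_eq_div, le_div_iff₀ hL0]
    linarith [key]
  linarith
end

section
/- Assume f satisfies the relative smoothness condition with constants μ_d(f) and L_d(f), let L ≥ L_d(f), let x̄ ∈ int(dom ψ) be one of the points z_1, …, z_m ∈ dom ψ, let δ ≥ 0, let λ̄ ∈ Δ_m satisfy ⟨λ̄ − λ, f_* − Gᵀ x_+⟩ ≤ δ for all λ ∈ Δ_m, where x_+ = y*_L(L∇d(x̄) − Gλ̄). Then for every y ∈ dom ψ satisfying β_d(z_i, y) ≥ β_d(x̄, y) for all i = 1, …, m: β_d(x_+, y) ≤ (1 − μ_d(f)/L) β_d(x̄, y) + (1/L)[F(y) − F(x_+) + δ], where F = f + ψ. -/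
open Set Filter Topology

lemma slope_le_fderiv' {E : Type*} [NormedAddCommGroup E] [NormedSpace ℝ E]
    {d : E → ℝ} {D : E →L[ℝ] ℝ} {x v : E} (hd : HasFDerivAt d D x) {a : ℝ}
    (h : ∀ t : ℝ, t ∈ Set.Ioo (0:ℝ) 1 → a ≤ (d (x + t • v) - d x) / t) : a ≤ D v := by
  have h1 : HasDerivAt (fun t : ℝ => x + t • v) v 0 := by
    simpa using ((hasDerivAt_id (0:ℝ)).smul_const v).const_add x
  have hc : HasDerivAt (fun t : ℝ => d (x + t • v)) (D v) 0 :=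
    HasFDerivAt.comp_hasDerivAt 0 (by simpa using hd) h1
  rw [hasDerivAt_iff_tendsto_slope] at hc
  have hc2 : Tendsto (slope (fun t : ℝ => d (x + t • v)) 0) (𝓝[>] 0) (𝓝 (D v)) :=
    hc.mono_left (nhdsWithin_mono _ (fun t ht => ne_of_gt ht))
  refine ge_of_tendsto hc2 ?_
  filter_upwards [Ioo_mem_nhdsGT_of_mem (by simp : (0:ℝ) ∈ Ico (0:ℝ) 1)] with t ht
  have := h t ht
  rw [slope_def_field]
  simp only [div_sub_div_same, sub_zero]
  simpa using this

lemma fderiv_le_slope' {E : Type*} [NormedAddCommGroup E] [NormedSpace ℝ E]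
    {d : E → ℝ} {D : E →L[ℝ] ℝ} {x v : E} (hd : HasFDerivAt d D x) {b : ℝ}
    (h : ∀ t : ℝ, t ∈ Set.Ioo (0:ℝ) 1 → (d (x + t • v) - d x) / t ≤ b) : D v ≤ b := by
  have := slope_le_fderiv' (d := fun w => -(d w)) (D := -D) hd.neg (a := -b) (v := v)
    (fun t ht => by
      have h1 := h t ht
      have e : (-(d (x + t • v)) - -(d x)) / t = -((d (x + t • v) - d x) / t) := by ring
      rw [e]; linarith)
  simpa using neg_le_neg_iff.mp (by simpa using this)

/-- Theorem `th-Step`, item 2, of "Gradient Methods with Memory".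

One step of the Inexact Gradient Method with Memory with `L ≥ L_d(f)`:
for every `y ∈ dom ψ` with `β_d(z_i, y) ≥ β_d(x̄, y)` for all `i`,
`β_d(x₊, y) ≤ (1 − μ_d(f)/L) β_d(x̄, y) + (1/L)[F(y) − F(x₊) + δ]`. -/
theorem gmm_th_Step_item2
    {E : Type*} [NormedAddCommGroup E] [NormedSpace ℝ E] [FiniteDimensional ℝ E]
    -- `Sd = dom d`, `U = dom f` (open), `S = dom ψ`
    (Sd U S : Set E) (hSU : S ⊆ U) (hUSd : U ⊆ Sd) (hUopen : IsOpen U) (hSconv : Convex ℝ S)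
    (d f ψ : E → ℝ) (d' f' : E → E →L[ℝ] ℝ)
    (hdconv : StrictConvexOn ℝ Sd d)
    (hd' : ∀ x ∈ interior Sd, HasFDerivAt d (d' x) x)
    (hf' : ∀ x ∈ U, HasFDerivAt f (f' x) x)
    (hfconv : ConvexOn ℝ U f)
    (hψconv : ConvexOn ℝ S ψ)
    -- Bregman distance of `d`
    (β : E → E → ℝ) (hβ : ∀ x y, β x y = d y - d x - (d' x) (y - x))
    -- relative smoothness of `f` with constants `0 ≤ μ_d(f) ≤ L_d(f)`
    (μ Lf : ℝ) (hμ0 : 0 ≤ μ) (hμLf : μ ≤ Lf)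
    (hsmooth : ∀ x ∈ U, ∀ y ∈ U,
      μ * β x y ≤ f y - f x - (f' x) (y - x) ∧ f y - f x - (f' x) (y - x) ≤ Lf * β x y)
    (L δ : ℝ) (hL0 : 0 < L) (hL : Lf ≤ L) (hδ : 0 ≤ δ)
    -- the bundle `z₁, …, z_m ∈ dom ψ`, containing `x̄ ∈ int(dom ψ)`
    (m : ℕ) (hm : 0 < m) (z : Fin m → E) (hzS : ∀ i, z i ∈ S)
    (xbar : E) (hxbar : xbar ∈ interior S) (j : Fin m) (hj : z j = xbar)
    (lam : Fin m → ℝ) (hlam : lam ∈ stdSimplex ℝ (Fin m))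
    -- `x₊ = y*_L(L∇d(x̄) − Gλ̄)`
    (xplus : E) (hxpS : xplus ∈ S) (hxpint : xplus ∈ interior Sd)
    (hxp : ∀ y ∈ S,
      (L • d' xbar - ∑ i, lam i • f' (z i)) y - L * d y - ψ y ≤
      (L • d' xbar - ∑ i, lam i • f' (z i)) xplus - L * d xplus - ψ xplus)
    -- approximate stationarity: `⟨λ̄ − λ, f_* − Gᵀ x₊⟩ ≤ δ` for all `λ ∈ Δ_m`
    (hstat : ∀ ν ∈ stdSimplex ℝ (Fin m),
      ∑ i, (lam i - ν i) * ((f' (z i)) (z i) - f (z i) - (f' (z i)) xplus) ≤ δ) :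
    ∀ y ∈ S, (∀ i, β xbar y ≤ β (z i) y) →
      β xplus y ≤ (1 - μ / L) * β xbar y +
        (1 / L) * ((f y + ψ y) - (f xplus + ψ xplus) + δ) := by
  intro y hyS hby
  -- memberships
  have hxbarS : xbar ∈ S := interior_subset hxbar
  have hxbarU : xbar ∈ U := hSU hxbarS
  have hUint : U ⊆ interior Sd := interior_maximal hUSd hUopen
  have hxbarInt : xbar ∈ interior Sd := hUint hxbarU
  have hxpU : xplus ∈ U := hSU hxpS
  have hyU : y ∈ U := hSU hyS
  -- abbreviations
  set Dp := d' xplus with hDp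
  set Db := d' xbar with hDb
  set A := ∑ i, lam i * (f' (z i)) y with hA
  set B := ∑ i, lam i * (f' (z i)) xplus with hB
  set C := ∑ i, lam i * ((f' (z i)) (z i) - f (z i)) with hC
  have happ : ∀ w : E, (L • d' xbar - ∑ i, lam i • f' (z i)) w
      = L * Db w - ∑ i, lam i * (f' (z i)) w := by
    intro w
    simp [ContinuousLinearMap.sub_apply, ContinuousLinearMap.smul_apply,
      ContinuousLinearMap.sum_apply, smul_eq_mul]
    exact Or.inl rfl
  -- F2 : split the sum
  have hF2 : ∑ i, lam i * (f' (z i)) (y - xplus) = A - B := by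
    rw [hA, hB, ← Finset.sum_sub_distrib]
    exact Finset.sum_congr rfl fun i _ => by rw [map_sub]; ring
  -- F1 : variational inequality
  have hVI : L * Db (y - xplus) - (A - B) - L * Dp (y - xplus) ≤ ψ y - ψ xplus := by
    have key : (((L • d' xbar - ∑ i, lam i • f' (z i)) (y - xplus)) - (ψ y - ψ xplus)) / L
        ≤ Dp (y - xplus) := by
      apply slope_le_fderiv' (hd' xplus hxpint)
      intro t ht
      have hw : xplus + t • (y - xplus) = (1 - t) • xplus + t • y := by module
      have hwS : xplus + t • (y - xplus) ∈ S := by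
        rw [hw]; exact hSconv hxpS hyS (by linarith [ht.2]) (le_of_lt ht.1) (by ring)
      have h1 := hxp _ hwS
      have h2 : ψ (xplus + t • (y - xplus)) ≤ (1 - t) * ψ xplus + t * ψ y := by
        rw [hw]
        exact hψconv.2 hxpS hyS (by linarith [ht.2]) (le_of_lt ht.1) (by ring)
      have h3 : (L • d' xbar - ∑ i, lam i • f' (z i)) (xplus + t • (y - xplus))
          = (L • d' xbar - ∑ i, lam i • f' (z i)) xplus
            + t * (L • d' xbar - ∑ i, lam i • f' (z i)) (y - xplus) := by
        rw [map_add, map_smul]; simp [smul_eq_mul]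
      rw [div_le_div_iff₀ hL0 ht.1]
      rw [h3] at h1
      linarith [h1, h2]
    rw [div_le_iff₀ hL0, happ, hF2] at key
    linarith [key]
  -- F3 : lower smoothness aggregated
  have hF3 : A ≤ f y - μ * β xbar y + C := by
    have hper : ∀ i ∈ Finset.univ, lam i * (f' (z i)) y
        ≤ lam i * ((f y - μ * β xbar y) + ((f' (z i)) (z i) - f (z i))) := by
      intro i _
      apply mul_le_mul_of_nonneg_left _ (hlam.1 i)
      have hs := (hsmooth (z i) (hSU (hzS i)) y hyU).1
      have hmap : (f' (z i)) (y - z i) = (f' (z i)) y - (f' (z i)) (z i) := map_sub _ _ _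
      have hmono : μ * β xbar y ≤ μ * β (z i) y := mul_le_mul_of_nonneg_left (hby i) hμ0
      linarith
    calc A ≤ ∑ i, lam i * ((f y - μ * β xbar y) + ((f' (z i)) (z i) - f (z i))) :=
          Finset.sum_le_sum hper
      _ = (∑ i, lam i) * (f y - μ * β xbar y) + C := by
          rw [hC, Finset.sum_mul, ← Finset.sum_add_distrib]
          exact Finset.sum_congr rfl fun i _ => by ring
      _ = f y - μ * β xbar y + C := by rw [hlam.2, one_mul]
  -- F4 : stationarity with the vertex e_j
  have hF4 : C - B - ((f' xbar) xbar - f xbar - (f' xbar) xplus) ≤ δ := by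
    have hν : (fun i => if i = j then (1:ℝ) else 0) ∈ stdSimplex ℝ (Fin m) := by
      constructor
      · intro i; dsimp only; split <;> norm_num
      · simp
    have h := hstat _ hν
    have h1 : ∑ i, (lam i - if i = j then (1:ℝ) else 0) *
        ((f' (z i)) (z i) - f (z i) - (f' (z i)) xplus)
        = (∑ i, lam i * ((f' (z i)) (z i) - f (z i) - (f' (z i)) xplus))
          - ∑ i, (if i = j then (1:ℝ) else 0) *
            ((f' (z i)) (z i) - f (z i) - (f' (z i)) xplus) := by
      rw [← Finset.sum_sub_distrib]
      exact Finset.sum_congr rfl fun i _ => by ring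
    have h2 : ∑ i, (if i = j then (1:ℝ) else 0) *
        ((f' (z i)) (z i) - f (z i) - (f' (z i)) xplus)
        = (f' (z j)) (z j) - f (z j) - (f' (z j)) xplus := by
      simp [ite_mul]
    have h3 : ∑ i, lam i * ((f' (z i)) (z i) - f (z i) - (f' (z i)) xplus) = C - B := by
      rw [hC, hB, ← Finset.sum_sub_distrib]
      exact Finset.sum_congr rfl fun i _ => by ring
    rw [h1, h2, h3, hj] at h
    exact h
  -- F6 : gradient inequality for convex d
  have hF6 : Db (xplus - xbar) ≤ d xplus - d xbar := by
    apply fderiv_le_slope' (hd' xbar hxbarInt)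
    intro t ht
    have hw : xbar + t • (xplus - xbar) = (1 - t) • xbar + t • xplus := by module
    have hconv : d (xbar + t • (xplus - xbar)) ≤ (1 - t) * d xbar + t * d xplus := by
      rw [hw]
      exact hdconv.convexOn.2 (hUSd hxbarU) (interior_subset hxpint)
        (by linarith [ht.2]) (le_of_lt ht.1) (by ring)
    rw [div_le_iff₀ ht.1]
    linarith [hconv]
  -- F5 : upper smoothness at xbar
  have hβpos : 0 ≤ β xbar xplus := by rw [hβ]; linarith [hF6]
  have hF5 : f xplus - f xbar - ((f' xbar) xplus - (f' xbar) xbar) ≤ L * β xbar xplus := by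
    have hs := (hsmooth xbar hxbarU xplus hxpU).2
    have hmap : (f' xbar) (xplus - xbar) = (f' xbar) xplus - (f' xbar) xbar := map_sub _ _ _
    have := mul_le_mul_of_nonneg_right hL hβpos
    linarith
  -- three-point identity
  have hid : β xbar y - β xbar xplus - β xplus y = Dp (y - xplus) - Db (y - xplus) := by
    rw [hβ, hβ, hβ]
    have hlin : Db (y - xbar) = Db (y - xplus) + Db (xplus - xbar) := by
      rw [← map_add]; congr 1; abel
    rw [hlin]; ring
  have hmul : L * (β xbar y - β xbar xplus - β xplus y)
      = L * (Dp (y - xplus) - Db (y - xplus)) := by rw [hid]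
  -- Key inequality (multiplied by L)
  have hK : L * β xplus y ≤ (L - μ) * β xbar y + ((f y + ψ y) - (f xplus + ψ xplus) + δ) := by
    linarith [hVI, hF3, hF4, hF5, hmul]
  -- conclude
  have hfinal : β xplus y ≤
      ((L - μ) * β xbar y + ((f y + ψ y) - (f xplus + ψ xplus) + δ)) / L := by
    rw [le_div_iff₀ hL0]; linarith [hK]
  calc β xplus y ≤ ((L - μ) * β xbar y + ((f y + ψ y) - (f xplus + ψ xplus) + δ)) / L := hfinal
    _ = (1 - μ / L) * β xbar y + (1 / L) * ((f y + ψ y) - (f xplus + ψ xplus) + δ) := by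
        field_simp
end

section
/- Assume f satisfies the relative smoothness condition with constants μ_d(f) and L_d(f), let L > 0, let x̄ ∈ int(dom ψ) be one of the points z_1, …, z_m ∈ dom ψ, let δ ≥ 0, let λ̄ ∈ Δ_m satisfy ⟨λ̄ − λ, f_* − Gᵀ x_+⟩ ≤ δ for all λ ∈ Δ_m, where x_+ = y*_L(L∇d(x̄) − Gλ̄). If instead of L ≥ L_d(f) one assumes the relaxed condition max_{1≤i≤m} [f_i + ⟨g_i, x_+ − z_i⟩] + L β_d(x̄, x_+) ≥ f(x_+), then for every y ∈ dom ψ: β_d(x_+, y) ≤ β_d(x̄, y) + (1/L)[F(y) − F(x_+) + δ], where F = f + ψ. -/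
lemma le_fderiv_of_slope {E : Type*} [NormedAddCommGroup E] [NormedSpace ℝ E]
    (d : E → ℝ) (x v : E) (d'x : E →L[ℝ] ℝ) (hd : HasFDerivAt d d'x x) (c : ℝ)
    (h : ∀ t ∈ Set.Ioc (0:ℝ) 1, c * t ≤ d (x + t • v) - d x) : c ≤ d'x v := by
  have h1 : HasDerivAt (fun t : ℝ => x + t • v) v 0 := by
    simpa using ((hasDerivAt_id (0:ℝ)).smul_const v).const_add x
  have hd2 : HasFDerivAt d d'x (x + (0:ℝ) • v) := by simpa using hd
  have hc : HasDerivAt (fun t : ℝ => d (x + t • v)) (d'x v) 0 := by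
    exact hd2.comp_hasDerivAt 0 h1
  rw [hasDerivAt_iff_tendsto_slope] at hc
  have hc' : Filter.Tendsto (slope (fun t : ℝ => d (x + t • v)) 0)
      (nhdsWithin 0 (Set.Ioi 0)) (nhds (d'x v)) :=
    hc.mono_left (nhdsWithin_mono _ (fun t ht => ne_of_gt ht))
  refine ge_of_tendsto hc' ?_
  filter_upwards [Ioc_mem_nhdsGT_of_mem (Set.left_mem_Ico.2 one_pos)] with t ht
  have h0 : (0:ℝ) < t := ht.1
  have hct := h t ht
  have : slope (fun t : ℝ => d (x + t • v)) 0 t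
      = (d (x + t • v) - d x) / t := by
    simp [slope, sub_zero, div_eq_inv_mul]
  rw [this, le_div_iff₀ h0]
  linarith

lemma fderiv_le_of_slope {E : Type*} [NormedAddCommGroup E] [NormedSpace ℝ E]
    (d : E → ℝ) (x v : E) (d'x : E →L[ℝ] ℝ) (hd : HasFDerivAt d d'x x) (c : ℝ)
    (h : ∀ t ∈ Set.Ioc (0:ℝ) 1, d (x + t • v) - d x ≤ t * c) : d'x v ≤ c := by
  have := le_fderiv_of_slope (fun w => -d w) x v (-d'x) hd.neg (-c)
    (fun t ht => by have := h t ht; show -c * t ≤ -d (x + t • v) - -d x; linarith)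
  simp only [ContinuousLinearMap.neg_apply] at this
  linarith

lemma grad_ineq {E : Type*} [NormedAddCommGroup E] [NormedSpace ℝ E]
    (U : Set E) (f : E → ℝ) (hf : ConvexOn ℝ U f) (x y : E) (hx : x ∈ U) (hy : y ∈ U)
    (f'x : E →L[ℝ] ℝ) (hf' : HasFDerivAt f f'x x) : f'x (y - x) ≤ f y - f x := by
  apply fderiv_le_of_slope f x (y - x) f'x hf'
  intro t ht
  have h1 : (1 - t) • x + t • y = x + t • (y - x) := by module
  have h2 := hf.2 hx hy (by linarith [ht.2] : (0:ℝ) ≤ 1 - t) ht.1.le (by ring)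
  rw [h1] at h2
  simp only [smul_eq_mul] at h2
  nlinarith [h2]

/-- Remark `rm-Step` of "Gradient Methods with Memory".

Theorem `th-Step`, item 1, remains valid if the condition `L ≥ L_d(f)` is replaced by the
relaxed condition `max_i [f_i + ⟨g_i, x₊ − z_i⟩] + L β_d(x̄, x₊) ≥ f(x₊)`. -/
theorem gmm_rm_Step
    {E : Type*} [NormedAddCommGroup E] [NormedSpace ℝ E] [FiniteDimensional ℝ E]
    -- `Sd = dom d`, `U = dom f` (open), `S = dom ψ`
    (Sd U S : Set E) (hSU : S ⊆ U) (hUSd : U ⊆ Sd) (hUopen : IsOpen U) (hSconv : Convex ℝ S)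
    (d f ψ : E → ℝ) (d' f' : E → E →L[ℝ] ℝ)
    (hdconv : StrictConvexOn ℝ Sd d)
    (hd' : ∀ x ∈ interior Sd, HasFDerivAt d (d' x) x)
    (hf' : ∀ x ∈ U, HasFDerivAt f (f' x) x)
    (hfconv : ConvexOn ℝ U f)
    (hψconv : ConvexOn ℝ S ψ)
    -- Bregman distance of `d`
    (β : E → E → ℝ) (hβ : ∀ x y, β x y = d y - d x - (d' x) (y - x))
    -- relative smoothness of `f` with constants `0 ≤ μ_d(f) ≤ L_d(f)`
    (μ Lf : ℝ) (hμ0 : 0 ≤ μ) (hμLf : μ ≤ Lf)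
    (hsmooth : ∀ x ∈ U, ∀ y ∈ U,
      μ * β x y ≤ f y - f x - (f' x) (y - x) ∧ f y - f x - (f' x) (y - x) ≤ Lf * β x y)
    (L δ : ℝ) (hL0 : 0 < L) (hδ : 0 ≤ δ)
    -- the bundle `z₁, …, z_m ∈ dom ψ`, containing `x̄ ∈ int(dom ψ)`
    (m : ℕ) (hm : 0 < m) (z : Fin m → E) (hzS : ∀ i, z i ∈ S)
    (xbar : E) (hxbar : xbar ∈ interior S) (j : Fin m) (hj : z j = xbar)
    (lam : Fin m → ℝ) (hlam : lam ∈ stdSimplex ℝ (Fin m))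
    -- `x₊ = y*_L(L∇d(x̄) − Gλ̄)`
    (xplus : E) (hxpS : xplus ∈ S) (hxpint : xplus ∈ interior Sd)
    (hxp : ∀ y ∈ S,
      (L • d' xbar - ∑ i, lam i • f' (z i)) y - L * d y - ψ y ≤
      (L • d' xbar - ∑ i, lam i • f' (z i)) xplus - L * d xplus - ψ xplus)
    -- approximate stationarity: `⟨λ̄ − λ, f_* − Gᵀ x₊⟩ ≤ δ` for all `λ ∈ Δ_m`
    (hstat : ∀ ν ∈ stdSimplex ℝ (Fin m),
      ∑ i, (lam i - ν i) * ((f' (z i)) (z i) - f (z i) - (f' (z i)) xplus) ≤ δ)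
    -- the relaxed condition replacing `L ≥ L_d(f)`:
    (hrelax : f xplus ≤
      (⨆ i : Fin m, (f (z i) + (f' (z i)) (xplus - z i))) + L * β xbar xplus) :
    ∀ y ∈ S,
      β xplus y ≤ β xbar y + (1 / L) * ((f y + ψ y) - (f xplus + ψ xplus) + δ) := by
  intro y hyS
  set a : Fin m → ℝ := fun i => (f' (z i)) (z i) - f (z i) - (f' (z i)) xplus with ha
  set b : Fin m → ℝ := fun i => f (z i) + (f' (z i)) (xplus - z i) with hb
  have : Nonempty (Fin m) := Fin.pos_iff_nonempty.mp hm
  -- choose a maximizer of b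
  obtain ⟨k, hk⟩ := Finite.exists_max b
  have hsup : (⨆ i, b i) ≤ b k := ciSup_le hk
  -- ν = e_k
  set ν : Fin m → ℝ := fun i => if i = k then (1:ℝ) else 0 with hν
  have hνS : ν ∈ stdSimplex ℝ (Fin m) := by
    constructor
    · intro i; simp only [hν]; split <;> norm_num
    · simp [hν]
  have hstatk := hstat ν hνS
  have hsum1 : ∑ i, lam i = 1 := hlam.2
  have hsumν : ∑ i, ν i * a i = a k := by
    simp [hν, ite_mul]
  have hsplit : ∑ i, (lam i - ν i) * a i = (∑ i, lam i * a i) - ∑ i, ν i * a i := by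
    rw [← Finset.sum_sub_distrib]; congr 1; ext i; ring
  have hak : a k = -(b k) := by
    simp only [ha, hb, map_sub]; ring
  have hla : ∑ i, lam i * a i ≤ δ - b k := by
    rw [hsplit, hsumν] at hstatk; linarith
  -- relaxed condition gives a bound on -(b k)
  have hbk : -(b k) ≤ L * β xbar xplus - f xplus := by
    have := le_trans hrelax (by linarith [hsup] : (⨆ i, b i) + L * β xbar xplus ≤ b k + L * β xbar xplus)
    linarith
  -- gradient inequality for each i
  have hgrad : ∀ i, (f' (z i)) (y - z i) ≤ f y - f (z i) := fun i =>
    grad_ineq U f hfconv (z i) y (hSU (hzS i)) (hSU hyS) (f' (z i)) (hf' (z i) (hSU (hzS i)))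
  -- per-i bound
  have hper : ∀ i, lam i * ((f' (z i)) (y - xplus)) ≤ lam i * (f y + a i) := by
    intro i
    apply mul_le_mul_of_nonneg_left _ (hlam.1 i)
    have hdec : (f' (z i)) (y - xplus) = (f' (z i)) (y - z i) + ((f' (z i)) (z i) - (f' (z i)) xplus) := by
      rw [← map_sub]; rw [← map_add]; congr 1; abel
    rw [hdec]
    have := hgrad i
    simp only [ha]
    linarith
  have hA : ∑ i, lam i * ((f' (z i)) (y - xplus)) ≤ f y + ∑ i, lam i * a i := by
    calc ∑ i, lam i * ((f' (z i)) (y - xplus)) ≤ ∑ i, lam i * (f y + a i) :=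
          Finset.sum_le_sum (fun i _ => hper i)
      _ = (∑ i, lam i) * f y + ∑ i, lam i * a i := by
          rw [Finset.sum_mul, ← Finset.sum_add_distrib]
          exact Finset.sum_congr rfl fun i _ => by ring
      _ = f y + ∑ i, lam i * a i := by rw [hsum1]; ring
  -- optimality of xplus : first-order condition via the slope limit
  set T : E →L[ℝ] ℝ := L • d' xbar - ∑ i, lam i • f' (z i) with hT
  have hopt : T (y - xplus) - (ψ y - ψ xplus) ≤ L * (d' xplus) (y - xplus) := by
    have hkey : ∀ t ∈ Set.Ioc (0:ℝ) 1,
        ((T (y - xplus) - (ψ y - ψ xplus)) / L) * t ≤ d (xplus + t • (y - xplus)) - d xplus := by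
      intro t ht
      have h0 : (0:ℝ) < t := ht.1
      have hw : (1 - t) • xplus + t • y = xplus + t • (y - xplus) := by module
      have hwS : xplus + t • (y - xplus) ∈ S := by
        rw [← hw]
        exact hSconv hxpS hyS (by linarith [ht.2]) h0.le (by ring)
      have hψw : ψ (xplus + t • (y - xplus)) ≤ (1 - t) * ψ xplus + t * ψ y := by
        have := hψconv.2 hxpS hyS (by linarith [ht.2] : (0:ℝ) ≤ 1 - t) h0.le (by ring)
        rw [hw] at this; simpa using this
      have hmax := hxp _ hwS
      have hTw : T (xplus + t • (y - xplus)) = T xplus + t * T (y - xplus) := by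
        rw [map_add, map_smul]; simp
      rw [hTw] at hmax
      rw [div_mul_eq_mul_div, div_le_iff₀ hL0]
      nlinarith [hmax, hψw]
    have := le_fderiv_of_slope d xplus (y - xplus) (d' xplus) (hd' xplus hxpint)
      ((T (y - xplus) - (ψ y - ψ xplus)) / L) hkey
    rw [div_le_iff₀ hL0] at this
    linarith
  -- expand T
  have hTexp : T (y - xplus) = L * (d' xbar) (y - xplus) - ∑ i, lam i * ((f' (z i)) (y - xplus)) := by
    simp [hT, ContinuousLinearMap.sub_apply, ContinuousLinearMap.smul_apply,
      ContinuousLinearMap.sum_apply, smul_eq_mul]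
  -- three-point identity
  have h3pt : β xplus y - β xbar y + β xbar xplus = (d' xbar) (y - xplus) - (d' xplus) (y - xplus) := by
    rw [hβ, hβ, hβ]
    have e1 : (d' xbar) (y - xbar) - (d' xbar) (xplus - xbar) = (d' xbar) (y - xplus) := by
      rw [← map_sub]; congr 1; abel
    linarith [e1]
  -- combine everything
  have h3pt' : L * β xplus y - L * β xbar y + L * β xbar xplus
      = L * ((d' xbar) (y - xplus)) - L * ((d' xplus) (y - xplus)) := by
    linear_combination L * h3pt
  have hmain : L * β xplus y ≤ L * β xbar y + (f y + ψ y - (f xplus + ψ xplus) + δ) := by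
    have h1 : L * ((d' xbar) (y - xplus)) - L * ((d' xplus) (y - xplus))
        ≤ ∑ i, lam i * ((f' (z i)) (y - xplus)) + (ψ y - ψ xplus) := by
      rw [hTexp] at hopt; linarith
    linarith [h3pt', hA, hla, hbk, h1]
  have hdiv : β xplus y - β xbar y ≤ (f y + ψ y - (f xplus + ψ xplus) + δ) / L := by
    rw [le_div_iff₀ hL0]; ring_nf; ring_nf at hmain; linarith
  have : (1 / L) * (f y + ψ y - (f xplus + ψ xplus) + δ)
      = (f y + ψ y - (f xplus + ψ xplus) + δ) / L := by ring
  linarith [hdiv, this.ge]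
end

section
/- Let f satisfy the relative smoothness condition with constant L_d(f), let L ≥ L_d(f) and δ ≥ 0, and let {x_k}_{k≥0} be a sequence generated by the Inexact Gradient Method with Memory: x_0 ∈ int(dom ψ), and for each k ≥ 0 there exist m_k ≥ 1 points z_{k,1}, …, z_{k,m_k} ∈ dom ψ with x_k among them, and λ̄_k ∈ Δ_{m_k} satisfying ⟨λ̄_k − λ, f_{*,k} − G_kᵀ x_{k+1}⟩ ≤ δ for all λ ∈ Δ_{m_k}, where x_{k+1} = y*_L(L∇d(x_k) − G_k λ̄_k). Then for any T ≥ 1 and any y ∈ dom ψ: (1/T) Σ_{k=1}^T F(x_k) ≤ F(y) + (L/T) β_d(x_0, y) + δ, where F = f + ψ. -/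
open Filter Topology

lemma aux_slope {E : Type*} [NormedAddCommGroup E] [NormedSpace ℝ E]
    (g : E → ℝ) (g' : E →L[ℝ] ℝ) (x v : E) (h : HasFDerivAt g g' x) :
    Filter.Tendsto (fun t : ℝ => (g (x + t • v) - g x) / t) (𝓝[>] (0:ℝ)) (𝓝 (g' v)) := by
  have hline : HasDerivAt (fun t : ℝ => x + t • v) v (0:ℝ) := by
    simpa using ((hasDerivAt_id (0:ℝ)).smul_const v).const_add x
  have h' : HasFDerivAt g g' ((fun t : ℝ => x + t • v) 0) := by simpa using h
  have h2 : HasDerivAt (fun t : ℝ => g (x + t • v)) (g' v) 0 := h'.comp_hasDerivAt 0 hline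
  have h3 := (hasDerivAt_iff_tendsto_slope.mp h2).mono_left
    (nhdsWithin_mono _ (fun t ht => ne_of_gt ht))
  refine h3.congr fun t => ?_
  simp [slope_def_field]

lemma aux_support {E : Type*} [NormedAddCommGroup E] [NormedSpace ℝ E]
    {C : Set E} {g : E → ℝ} (hg : ConvexOn ℝ C g) {x y : E} (hx : x ∈ C) (hy : y ∈ C)
    {g' : E →L[ℝ] ℝ} (hd : HasFDerivAt g g' x) :
    g' (y - x) ≤ g y - g x := by
  refine le_of_tendsto (aux_slope g g' x (y - x) hd) ?_
  filter_upwards [Ioc_mem_nhdsGT_of_mem (by norm_num : (0:ℝ) ∈ Set.Ico (0:ℝ) 1)] with t ht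
  obtain ⟨ht0, ht1⟩ := ht
  have hmem : x + t • (y - x) = (1 - t) • x + t • y := by module
  have hcv := hg.2 hx hy (by linarith : (0:ℝ) ≤ 1 - t) ht0.le (by ring)
  rw [← hmem] at hcv
  simp only [smul_eq_mul] at hcv
  rw [div_le_iff₀ ht0]
  nlinarith

/-- Theorem `th-RateIGMMa` of "Gradient Methods with Memory".

For the sequence generated by the Inexact Gradient Method with Memory with `L ≥ L_d(f)`:
for any `T ≥ 1` and `y ∈ dom ψ`, `(1/T) Σ_{k=1}^T F(x_k) ≤ F(y) + (L/T) β_d(x_0, y) + δ`. -/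
theorem gmm_th_RateIGMMa
    {E : Type*} [NormedAddCommGroup E] [NormedSpace ℝ E] [FiniteDimensional ℝ E]
    -- `Sd = dom d`, `U = dom f` (open), `S = dom ψ`
    (Sd U S : Set E) (hSU : S ⊆ U) (hUSd : U ⊆ Sd) (hUopen : IsOpen U) (hSconv : Convex ℝ S)
    (d f ψ : E → ℝ) (d' f' : E → E →L[ℝ] ℝ)
    (hdconv : StrictConvexOn ℝ Sd d)
    (hd' : ∀ x ∈ interior Sd, HasFDerivAt d (d' x) x)
    (hf' : ∀ x ∈ U, HasFDerivAt f (f' x) x)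
    (hfconv : ConvexOn ℝ U f)
    (hψconv : ConvexOn ℝ S ψ)
    -- Bregman distance of `d`
    (β : E → E → ℝ) (hβ : ∀ x y, β x y = d y - d x - (d' x) (y - x))
    -- relative smoothness of `f` with constants `0 ≤ μ_d(f) ≤ L_d(f)`
    (μ Lf : ℝ) (hμ0 : 0 ≤ μ) (hμLf : μ ≤ Lf)
    (hsmooth : ∀ x ∈ U, ∀ y ∈ U,
      μ * β x y ≤ f y - f x - (f' x) (y - x) ∧ f y - f x - (f' x) (y - x) ≤ Lf * β x y)
    (L δ : ℝ) (hL0 : 0 < L) (hL : Lf ≤ L) (hδ : 0 ≤ δ)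
    -- the iterates of the Inexact Gradient Method with Memory
    (x : ℕ → E) (hxint : ∀ k, x k ∈ interior S)
    -- at step `k`: a bundle `z_{k,1}, …, z_{k,m_k} ∈ dom ψ` containing `x_k`
    (m : ℕ → ℕ) (hm : ∀ k, 0 < m k)
    (z : (k : ℕ) → Fin (m k) → E) (hzS : ∀ k i, z k i ∈ S)
    (hxmem : ∀ k, ∃ j, z k j = x k)
    (lam : (k : ℕ) → Fin (m k) → ℝ) (hlam : ∀ k, lam k ∈ stdSimplex ℝ (Fin (m k)))
    -- `x_{k+1} = y*_L(L∇d(x_k) − G_k λ̄_k)`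
    (hsucc : ∀ k, ∀ y ∈ S,
      (L • d' (x k) - ∑ i, lam k i • f' (z k i)) y - L * d y - ψ y ≤
      (L • d' (x k) - ∑ i, lam k i • f' (z k i)) (x (k + 1)) - L * d (x (k + 1))
        - ψ (x (k + 1)))
    -- approximate stationarity: `⟨λ̄_k − λ, f_{*,k} − G_kᵀ x_{k+1}⟩ ≤ δ` for all `λ ∈ Δ_{m_k}`
    (hstat : ∀ k, ∀ ν ∈ stdSimplex ℝ (Fin (m k)),
      ∑ i, (lam k i - ν i) *
        ((f' (z k i)) (z k i) - f (z k i) - (f' (z k i)) (x (k + 1))) ≤ δ) :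
    ∀ T : ℕ, 1 ≤ T → ∀ y ∈ S,
      (1 / (T : ℝ)) * ∑ k ∈ Finset.Icc 1 T, (f (x k) + ψ (x k)) ≤
        (f y + ψ y) + (L / (T : ℝ)) * β (x 0) y + δ := by
  intro T hT y hy
  have hSsub : S ⊆ Sd := fun u hu => hUSd (hSU hu)
  have hxU : ∀ k, x k ∈ U := fun k => hSU (interior_subset (hxint k))
  have hUint : U ⊆ interior Sd := (hUopen.subset_interior_iff).mpr hUSd
  have hd'x : ∀ k, HasFDerivAt d (d' (x k)) (x k) := fun k => hd' _ (hUint (hxU k))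
  have hβ0 : ∀ k, ∀ w ∈ S, 0 ≤ β (x k) w := by
    intro k w hw
    have h := aux_support hdconv.convexOn (hSsub (interior_subset (hxint k)))
      (hSsub hw) (hd'x k)
    rw [hβ]; linarith
  -- per-step key inequality
  have key : ∀ k, f (x (k+1)) + ψ (x (k+1)) + L * β (x (k+1)) y ≤
      (f y + ψ y) + L * β (x k) y + δ := by
    intro k
    obtain ⟨j, hj⟩ := hxmem k
    have hxpS : x (k+1) ∈ S := interior_subset (hxint (k+1))
    have hxkS : x k ∈ S := interior_subset (hxint k)
    have hxpU : x (k+1) ∈ U := hSU hxpS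
    have hd'p : HasFDerivAt d (d' (x (k+1))) (x (k+1)) := hd'x (k+1)
    set s : E →L[ℝ] ℝ := L • d' (x k) - ∑ i, lam k i • f' (z k i) with hs
    -- strengthened optimality (claim1)
    have hstep : s y - s (x (k+1)) - (ψ y - ψ (x (k+1))) ≤ L * (d' (x (k+1))) (y - x (k+1)) := by
      have hlim := (aux_slope d (d' (x (k+1))) (x (k+1)) (y - x (k+1)) hd'p).const_mul L
      refine ge_of_tendsto hlim ?_
      filter_upwards [Ioc_mem_nhdsGT_of_mem (by norm_num : (0:ℝ) ∈ Set.Ico (0:ℝ) 1)] with t ht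
      obtain ⟨ht0, ht1⟩ := ht
      have hu : (1 - t) • (x (k+1)) + t • y = x (k+1) + t • (y - x (k+1)) := by module
      have huS : x (k+1) + t • (y - x (k+1)) ∈ S := by
        rw [← hu]; exact hSconv hxpS hy (by linarith) ht0.le (by ring)
      have h1 := hsucc k _ huS
      rw [← hs] at h1
      have h2 := hψconv.2 hxpS hy (by linarith : (0:ℝ) ≤ 1 - t) ht0.le (by ring)
      rw [hu] at h2
      simp only [smul_eq_mul] at h2
      have h3 : s (x (k+1) + t • (y - x (k+1))) = s (x (k+1)) + t * s (y - x (k+1)) := by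
        rw [map_add, map_smul]; simp [smul_eq_mul]
      have h4 : s (y - x (k+1)) = s y - s (x (k+1)) := map_sub _ _ _
      rw [h3, h4] at h1
      rw [← mul_div_assoc, le_div_iff₀ ht0]
      nlinarith [h1, h2]
    -- smoothness (claim2)
    have claim2 : f (x (k+1)) - f (x k) - (f' (x k)) (x (k+1) - x k) ≤ L * β (x k) (x (k+1)) :=
      le_trans (hsmooth (x k) (hxU k) (x (k+1)) hxpU).2
        (mul_le_mul_of_nonneg_right hL (hβ0 k _ hxpS))
    -- stationarity (claim3)
    have claim3 : f (x k) + (f' (x k)) (x (k+1) - x k) ≤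
        (∑ i, lam k i * (f (z k i) + (f' (z k i)) (x (k+1) - z k i))) + δ := by
      have hν : (fun i => if i = j then (1:ℝ) else 0) ∈ stdSimplex ℝ (Fin (m k)) := by
        constructor
        · intro i; dsimp; split <;> norm_num
        · simp
      have h4 := hstat k _ hν
      have hsum1 : ∑ i, (lam k i - if i = j then (1:ℝ) else 0) *
          ((f' (z k i)) (z k i) - f (z k i) - (f' (z k i)) (x (k + 1))) =
          (f (x k) + (f' (x k)) (x (k+1) - x k))
            - ∑ i, lam k i * (f (z k i) + (f' (z k i)) (x (k+1) - z k i)) := by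
        simp only [sub_mul, ite_mul, one_mul, zero_mul]
        rw [Finset.sum_sub_distrib, Finset.sum_ite_eq' Finset.univ j]
        simp only [Finset.mem_univ, if_true]
        rw [hj]
        have hterm : ∀ i, lam k i * ((f' (z k i)) (z k i) - f (z k i) - (f' (z k i)) (x (k + 1)))
            = -(lam k i * (f (z k i) + (f' (z k i)) (x (k+1) - z k i))) := by
          intro i; rw [map_sub]; ring
        rw [Finset.sum_congr rfl (fun i _ => hterm i), Finset.sum_neg_distrib,
          map_sub (f' (x k))]
        ring
      rw [hsum1] at h4
      linarith
    -- model below f (claim4)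
    have claim4 : ∑ i, lam k i * (f (z k i) + (f' (z k i)) (y - z k i)) ≤ f y := by
      have hb : ∀ i ∈ Finset.univ, lam k i * (f (z k i) + (f' (z k i)) (y - z k i))
          ≤ lam k i * f y := by
        intro i _
        have hsup := aux_support hfconv (hSU (hzS k i)) (hSU hy) (hf' _ (hSU (hzS k i)))
        exact mul_le_mul_of_nonneg_left (by linarith) ((hlam k).1 i)
      calc ∑ i, lam k i * (f (z k i) + (f' (z k i)) (y - z k i))
          ≤ ∑ i, lam k i * f y := Finset.sum_le_sum hb
        _ = f y := by rw [← Finset.sum_mul, (hlam k).2, one_mul]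
    -- model difference identity (claim5)
    have claim5 : (∑ i, lam k i * (f (z k i) + (f' (z k i)) (x (k+1) - z k i)))
        - (∑ i, lam k i * (f (z k i) + (f' (z k i)) (y - z k i)))
        = (∑ i, lam k i * (f' (z k i)) (x (k+1))) - (∑ i, lam k i * (f' (z k i)) y) := by
      rw [← Finset.sum_sub_distrib, ← Finset.sum_sub_distrib]
      refine Finset.sum_congr rfl fun i _ => ?_
      rw [map_sub, map_sub]; ring
    -- expansions of s
    have hsy : s y = L * (d' (x k)) y - ∑ i, lam k i * (f' (z k i)) y := by
      rw [hs]
      simp [ContinuousLinearMap.sub_apply, ContinuousLinearMap.smul_apply,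
        ContinuousLinearMap.sum_apply, smul_eq_mul]
    have hsp : s (x (k+1)) = L * (d' (x k)) (x (k+1))
        - ∑ i, lam k i * (f' (z k i)) (x (k+1)) := by
      rw [hs]
      simp [ContinuousLinearMap.sub_apply, ContinuousLinearMap.smul_apply,
        ContinuousLinearMap.sum_apply, smul_eq_mul]
    rw [hsy, hsp] at hstep
    simp only [hβ, map_sub] at hstep claim2 claim3 claim4 claim5 ⊢
    linarith [hstep, claim2, claim3, claim4, claim5]
  -- summation
  have ha0 : 0 ≤ β (x T) y := hβ0 T y hy
  have hsum : ∑ k ∈ Finset.Icc 1 T, (f (x k) + ψ (x k)) ≤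
      (T : ℝ) * ((f y + ψ y) + δ) + L * β (x 0) y - L * β (x T) y := by
    have h1 : ∑ k ∈ Finset.Icc 1 T, (f (x k) + ψ (x k))
        = ∑ k ∈ Finset.range T, (f (x (k+1)) + ψ (x (k+1))) := by
      rw [← Finset.Ico_add_one_right_eq_Icc, Finset.sum_Ico_eq_sum_range]
      simp [Nat.add_sub_cancel, add_comm 1]
    rw [h1]
    have h2 : ∀ k ∈ Finset.range T, f (x (k+1)) + ψ (x (k+1)) ≤
        ((f y + ψ y) + δ) + (L * β (x k) y - L * β (x (k+1)) y) := by
      intro k _; linarith [key k]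
    calc ∑ k ∈ Finset.range T, (f (x (k+1)) + ψ (x (k+1)))
        ≤ ∑ k ∈ Finset.range T, (((f y + ψ y) + δ) + (L * β (x k) y - L * β (x (k+1)) y)) :=
          Finset.sum_le_sum h2
      _ = (T : ℝ) * ((f y + ψ y) + δ) + (L * β (x 0) y - L * β (x T) y) := by
          rw [Finset.sum_add_distrib, Finset.sum_const, Finset.card_range,
            Finset.sum_range_sub' (fun k => L * β (x k) y)]
          simp [nsmul_eq_mul]; ring
      _ = (T : ℝ) * ((f y + ψ y) + δ) + L * β (x 0) y - L * β (x T) y := by ring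
  have hTpos : (0:ℝ) < (T:ℝ) := by exact_mod_cast Nat.lt_of_lt_of_le Nat.zero_lt_one hT
  have h5 : (1 / (T:ℝ)) * ∑ k ∈ Finset.Icc 1 T, (f (x k) + ψ (x k)) ≤
      (1 / (T:ℝ)) * ((T : ℝ) * ((f y + ψ y) + δ) + L * β (x 0) y) := by
    apply mul_le_mul_of_nonneg_left _ (by positivity)
    nlinarith [hsum, ha0, hL0.le]
  have h6 : (1 / (T:ℝ)) * ((T : ℝ) * ((f y + ψ y) + δ) + L * β (x 0) y)
      = (f y + ψ y) + (L / (T:ℝ)) * β (x 0) y + δ := by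
    field_simp; ring
  linarith [h5, h6.le, h6.ge]
end

section
/- Let f satisfy the relative smoothness condition with constants μ_d(f) > 0 and L_d(f), let L ≥ L_d(f) and δ ≥ 0, and let {x_k}_{k≥0} be a sequence generated by the Inexact Gradient Method with Memory in which at each iteration k the test-point set Z_k contains x_k and satisfies Z_k ⊆ {x_0, …, x_k}: for each k there exists λ̄_k ∈ Δ_{m_k} satisfying ⟨λ̄_k − λ, f_{*,k} − G_kᵀ x_{k+1}⟩ ≤ δ for all λ ∈ Δ_{m_k}, where x_{k+1} = y*_L(L∇d(x_k) − G_k λ̄_k). Let x* be a minimizer of F = f + ψ with F* = F(x*), let T ≥ 1, and suppose F(x_k) − F* ≥ δ for all 1 ≤ k ≤ T. Then, with γ = μ_d(f)/L and Δ*_T = min_{1≤k≤T} [F(x_k) − F*]: Δ*_T ≤ δ + ((1−γ)^T μ_d(f) / (1 − (1−γ)^T)) β_d(x_0, x*) ≤ δ + (μ_d(f) / (e^{γT} − 1)) β_d(x_0, x*) ≤ δ + (L/T) β_d(x_0, x*). -/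
open Filter Set in
private lemma auxSlopeLe {g : ℝ → ℝ} {c M : ℝ} (hg : HasDerivAt g c 0)
    (h : ∀ t : ℝ, 0 < t → t < 1 → g t - g 0 ≤ t * M) : c ≤ M := by
  have h1 : Filter.Tendsto (slope g 0) (nhdsWithin 0 (Set.Ioi 0)) (nhds c) :=
    (hasDerivAt_iff_tendsto_slope.mp hg).mono_left
      (nhdsWithin_mono _ (fun t ht => ne_of_gt ht))
  refine le_of_tendsto h1 ?_
  filter_upwards [Ioo_mem_nhdsGT_of_mem (Set.left_mem_Ico.mpr zero_lt_one)] with t ht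
  rw [slope_def_field, sub_zero, div_le_iff₀ ht.1]
  calc g t - g 0 ≤ t * M := h t ht.1 ht.2
  _ = M * t := mul_comm _ _

private lemma auxSlopeGe {g : ℝ → ℝ} {c M : ℝ} (hg : HasDerivAt g c 0)
    (h : ∀ t : ℝ, 0 < t → t < 1 → t * M ≤ g t - g 0) : M ≤ c := by
  have h2 : -c ≤ -M := by
    refine auxSlopeLe (g := fun t => -g t) hg.neg ?_
    intro t h0 h1
    have h3 := h t h0 h1
    have h4 : t * -M = -(t * M) := by ring
    show -g t - -g 0 ≤ t * -M
    linarith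
  linarith

private lemma auxLine {E : Type*} [NormedAddCommGroup E] [NormedSpace ℝ E]
    {d : E → ℝ} {D : E →L[ℝ] ℝ} {p : E} (hd : HasFDerivAt d D p) (v : E) :
    HasDerivAt (fun t : ℝ => d (p + t • v)) (D v) 0 := by
  have hline : HasDerivAt (fun t : ℝ => p + t • v) v 0 := by
    simpa using ((hasDerivAt_id (0:ℝ)).smul_const v).const_add p
  have hd2 : HasFDerivAt d D ((fun t : ℝ => p + t • v) 0) := by simpa using hd
  exact hd2.comp_hasDerivAt 0 hline

private lemma auxGrad {E : Type*} [NormedAddCommGroup E] [NormedSpace ℝ E]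
    {S : Set E} {d : E → ℝ} (hd : ConvexOn ℝ S d) {p q : E} (hp : p ∈ S) (hq : q ∈ S)
    {D : E →L[ℝ] ℝ} (hD : HasFDerivAt d D p) : D (q - p) ≤ d q - d p := by
  refine auxSlopeLe (auxLine hD (q - p)) ?_
  intro t h0 h1
  have hmem : p + t • (q - p) = (1 - t) • p + t • q := by
    rw [smul_sub, sub_smul, one_smul]; abel
  have h2 := hd.2 hp hq (by linarith : (0:ℝ) ≤ 1 - t) h0.le (by ring)
  rw [smul_eq_mul, smul_eq_mul] at h2
  simp only [zero_smul, add_zero]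
  rw [hmem]
  linarith

set_option maxHeartbeats 1000000

/-- Theorem `th-RateIGMMb` of "Gradient Methods with Memory".

For the sequence generated by the Inexact Gradient Method with Memory with `L ≥ L_d(f)`,
`μ_d(f) > 0`, bundles satisfying `x_k ∈ Z_k ⊆ {x_0, …, x_k}`, and `F(x_k) − F* ≥ δ` for
`1 ≤ k ≤ T`, the quantity `Δ*_T = min_{1≤k≤T} [F(x_k) − F*]` satisfies, with `γ = μ_d(f)/L`:
`Δ*_T ≤ δ + ((1−γ)^T μ/(1−(1−γ)^T)) β_d(x_0,x*) ≤ δ + (μ/(e^{γT}−1)) β_d(x_0,x*)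
      ≤ δ + (L/T) β_d(x_0,x*)`. -/

theorem gmm_th_RateIGMMb
    {E : Type*} [NormedAddCommGroup E] [NormedSpace ℝ E] [FiniteDimensional ℝ E]
    -- `Sd = dom d`, `U = dom f` (open), `S = dom ψ`
    (Sd U S : Set E) (hSU : S ⊆ U) (hUSd : U ⊆ Sd) (hUopen : IsOpen U) (hSconv : Convex ℝ S)
    (d f ψ : E → ℝ) (d' f' : E → E →L[ℝ] ℝ)
    (hdconv : StrictConvexOn ℝ Sd d)
    (hd' : ∀ x ∈ interior Sd, HasFDerivAt d (d' x) x)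
    (hf' : ∀ x ∈ U, HasFDerivAt f (f' x) x)
    (hfconv : ConvexOn ℝ U f)
    (hψconv : ConvexOn ℝ S ψ)
    -- Bregman distance of `d`
    (β : E → E → ℝ) (hβ : ∀ x y, β x y = d y - d x - (d' x) (y - x))
    -- relative smoothness of `f` with constants `0 < μ_d(f) ≤ L_d(f)`
    (μ Lf : ℝ) (hμ0 : 0 < μ) (hμLf : μ ≤ Lf)
    (hsmooth : ∀ x ∈ U, ∀ y ∈ U,
      μ * β x y ≤ f y - f x - (f' x) (y - x) ∧ f y - f x - (f' x) (y - x) ≤ Lf * β x y)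
    (L δ : ℝ) (hL0 : 0 < L) (hL : Lf ≤ L) (hδ : 0 ≤ δ)
    -- the iterates of the Inexact Gradient Method with Memory
    (x : ℕ → E) (hxint : ∀ k, x k ∈ interior S)
    -- at step `k`: a bundle `Z_k` with `x_k ∈ Z_k ⊆ {x_0, …, x_k}`
    (m : ℕ → ℕ) (hm : ∀ k, 0 < m k)
    (z : (k : ℕ) → Fin (m k) → E) (hzS : ∀ k i, z k i ∈ S)
    (hxmem : ∀ k, ∃ j, z k j = x k)
    (hZsub : ∀ k i, ∃ j ≤ k, z k i = x j)
    (lam : (k : ℕ) → Fin (m k) → ℝ) (hlam : ∀ k, lam k ∈ stdSimplex ℝ (Fin (m k)))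
    -- `x_{k+1} = y*_L(L∇d(x_k) − G_k λ̄_k)`
    (hsucc : ∀ k, ∀ y ∈ S,
      (L • d' (x k) - ∑ i, lam k i • f' (z k i)) y - L * d y - ψ y ≤
      (L • d' (x k) - ∑ i, lam k i • f' (z k i)) (x (k + 1)) - L * d (x (k + 1))
        - ψ (x (k + 1)))
    -- approximate stationarity: `⟨λ̄_k − λ, f_{*,k} − G_kᵀ x_{k+1}⟩ ≤ δ` for all `λ ∈ Δ_{m_k}`
    (hstat : ∀ k, ∀ ν ∈ stdSimplex ℝ (Fin (m k)),
      ∑ i, (lam k i - ν i) *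
        ((f' (z k i)) (z k i) - f (z k i) - (f' (z k i)) (x (k + 1))) ≤ δ)
    -- `x*` is a minimizer of `F = f + ψ`
    (xstar : E) (hxstarS : xstar ∈ S)
    (hxstar : ∀ y ∈ S, f xstar + ψ xstar ≤ f y + ψ y)
    (T : ℕ) (hT : 1 ≤ T)
    -- `F(x_k) − F* ≥ δ` for `1 ≤ k ≤ T`
    (hbig : ∀ k, 1 ≤ k → k ≤ T → δ ≤ f (x k) + ψ (x k) - (f xstar + ψ xstar)) :
    (Finset.Icc 1 T).inf' (Finset.nonempty_Icc.mpr hT)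
        (fun k => f (x k) + ψ (x k) - (f xstar + ψ xstar)) ≤
      δ + ((1 - μ / L) ^ T * μ / (1 - (1 - μ / L) ^ T)) * β (x 0) xstar ∧
    δ + ((1 - μ / L) ^ T * μ / (1 - (1 - μ / L) ^ T)) * β (x 0) xstar ≤
      δ + (μ / (Real.exp ((μ / L) * T) - 1)) * β (x 0) xstar ∧
    δ + (μ / (Real.exp ((μ / L) * T) - 1)) * β (x 0) xstar ≤
      δ + (L / (T : ℝ)) * β (x 0) xstar := by

  -- basic memberships
  have hUSd' : U ⊆ interior Sd := interior_maximal hUSd hUopen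
  have hxS : ∀ k, x k ∈ S := fun k => interior_subset (hxint k)
  have hxU : ∀ k, x k ∈ U := fun k => hSU (hxS k)
  have hzU : ∀ k i, z k i ∈ U := fun k i => hSU (hzS k i)
  have hstarU : xstar ∈ U := hSU hxstarS
  have hstarSd : xstar ∈ Sd := hUSd hstarU
  have hβnn : ∀ p ∈ U, ∀ q ∈ Sd, 0 ≤ β p q := by
    intro p hp q hq
    have h := auxGrad hdconv.convexOn (hUSd hp) hq (hd' p (hUSd' hp))
    rw [hβ]; linarith
  have hr0 : 0 ≤ β (x 0) xstar := hβnn _ (hxU 0) _ hstarSd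
  have hγ0 : 0 < μ / L := div_pos hμ0 hL0
  have hγ1 : μ / L ≤ 1 := (div_le_one hL0).mpr (le_trans hμLf hL)
  -- key per-step inequality
  have key : ∀ k : ℕ, (∀ j, j ≤ k → β (x k) xstar ≤ β (x j) xstar) →
      f (x (k+1)) + ψ (x (k+1)) - (f xstar + ψ xstar) - δ ≤
        L * β (x k) xstar - μ * β (x k) xstar - L * β (x (k+1)) xstar := by
    intro k hmono
    obtain ⟨j, hj⟩ := hxmem k
    -- stationarity with ν = e_j
    have hν : (fun i => if i = j then (1:ℝ) else 0) ∈ stdSimplex ℝ (Fin (m k)) := by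
      constructor
      · intro i; by_cases h : i = j <;> simp [h]
      · simp
    have hd1 := hstat k _ hν
    simp only [sub_mul, ite_mul, one_mul, zero_mul, Finset.sum_sub_distrib,
      Finset.sum_ite_eq, Finset.sum_ite_eq', Finset.mem_univ, if_true] at hd1
    rw [hj] at hd1
    simp only [mul_sub, Finset.sum_sub_distrib] at hd1
    -- strong convexity sum
    have he : ∑ i, lam k i * f (z k i) + ∑ i, lam k i * (f' (z k i)) xstar
        - ∑ i, lam k i * (f' (z k i)) (z k i) ≤ f xstar - μ * β (x k) xstar := by
      have hsum : ∑ i, lam k i * (f (z k i) + (f' (z k i)) xstar - (f' (z k i)) (z k i)) ≤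
          ∑ i, lam k i * (f xstar - μ * β (x k) xstar) := by
        refine Finset.sum_le_sum ?_
        intro i _
        refine mul_le_mul_of_nonneg_left ?_ ((hlam k).1 i)
        have hsc := (hsmooth (z k i) (hzU k i) xstar hstarU).1
        rw [map_sub] at hsc
        obtain ⟨j', hj', hzz⟩ := hZsub k i
        have hmo : β (x k) xstar ≤ β (z k i) xstar := by rw [hzz]; exact hmono j' hj'
        have := mul_le_mul_of_nonneg_left hmo hμ0.le
        linarith
      rw [← Finset.sum_mul, (hlam k).2, one_mul] at hsum
      simp only [mul_add, mul_sub, Finset.sum_add_distrib, Finset.sum_sub_distrib] at hsum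
      linarith
    -- relative smoothness at x_k
    have hsm : f (x (k+1)) ≤ f (x k) + ((f' (x k)) (x (k+1)) - (f' (x k)) (x k))
        + L * β (x k) (x (k+1)) := by
      have h2 := (hsmooth (x k) (hxU k) (x (k+1)) (hxU (k+1))).2
      rw [map_sub] at h2
      have hb := hβnn (x k) (hxU k) (x (k+1)) (hUSd (hxU (k+1)))
      nlinarith [mul_nonneg (sub_nonneg.mpr hL) hb]
    -- three point inequality from the optimality of x_{k+1}
    have hdk1 := hd' (x (k+1)) (hUSd' (hxU (k+1)))
    set v := xstar - x (k+1) with hv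
    have htp : ((L • d' (x k) - ∑ i, lam k i • f' (z k i)) : E →L[ℝ] ℝ) v
        + ψ (x (k+1)) - ψ xstar ≤ L * ((d' (x (k+1))) v) := by
      refine auxSlopeGe ((auxLine hdk1 v).const_mul L) ?_
      intro t h0 h1
      have hmem : x (k+1) + t • v = (1 - t) • x (k+1) + t • xstar := by
        rw [hv, smul_sub, sub_smul, one_smul]; abel
      have hptS : x (k+1) + t • v ∈ S := by
        rw [hmem]; exact hSconv (hxS (k+1)) hxstarS (by linarith) h0.le (by ring)
      have h2 := hsucc k _ hptS
      have h3 : ψ (x (k+1) + t • v) ≤ (1 - t) * ψ (x (k+1)) + t * ψ xstar := by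
        rw [hmem]
        have h4 := hψconv.2 (hxS (k+1)) hxstarS (by linarith : (0:ℝ) ≤ 1 - t) h0.le (by ring)
        simpa [smul_eq_mul] using h4
      have h4 : ((L • d' (x k) - ∑ i, lam k i • f' (z k i)) : E →L[ℝ] ℝ) (x (k+1) + t • v)
          = ((L • d' (x k) - ∑ i, lam k i • f' (z k i)) : E →L[ℝ] ℝ) (x (k+1))
            + t * ((L • d' (x k) - ∑ i, lam k i • f' (z k i)) : E →L[ℝ] ℝ) v := by
        rw [map_add, map_smul, smul_eq_mul]
      simp only [zero_smul, add_zero]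
      nlinarith [h2, h3, h4]
    -- Bregman three-point identity
    have hid : β (x k) xstar - β (x k) (x (k+1)) - β (x (k+1)) xstar
        = (d' (x (k+1))) v - (d' (x k)) v := by
      simp only [hβ]; rw [hv]; simp only [map_sub]; ring
    have hcL : L * β (x k) xstar - L * β (x k) (x (k+1)) - L * β (x (k+1)) xstar
        = L * ((d' (x (k+1))) v) - L * ((d' (x k)) v) := by
      linear_combination L * hid
    have hAp : ∀ w : E, ((∑ i, lam k i • f' (z k i)) : E →L[ℝ] ℝ) w
        = ∑ i, lam k i * (f' (z k i)) w := by
      intro w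
      simp [ContinuousLinearMap.sum_apply, ContinuousLinearMap.smul_apply]
    have hsv : ((L • d' (x k) - ∑ i, lam k i • f' (z k i)) : E →L[ℝ] ℝ) v
        = L * ((d' (x k)) v)
          - (∑ i, lam k i * (f' (z k i)) xstar - ∑ i, lam k i * (f' (z k i)) (x (k+1))) := by
      simp only [hv, ContinuousLinearMap.sub_apply, ContinuousLinearMap.smul_apply,
        smul_eq_mul, map_sub, hAp]
      ring
    linarith [hd1, he, hsm, htp, hcL, hsv]
  -- monotonicity of the Bregman distances to x*
  have mono : ∀ k, k ≤ T → ∀ j, j ≤ k → β (x k) xstar ≤ β (x j) xstar := by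
    intro k
    induction k with
    | zero =>
      intro _ j hj
      have hj0 : j = 0 := Nat.le_zero.mp hj
      rw [hj0]
    | succ n ih =>
      intro hn j hj
      have ihn := ih (Nat.le_of_succ_le hn)
      have hk := key n ihn
      have hb := hbig (n+1) (Nat.succ_le_succ (Nat.zero_le n)) hn
      have hrn : 0 ≤ β (x n) xstar := hβnn _ (hxU n) _ hstarSd
      have hle : β (x (n+1)) xstar ≤ β (x n) xstar := by
        have h1 : L * β (x (n+1)) xstar ≤ L * β (x n) xstar := by
          have := mul_nonneg hμ0.le hrn
          linarith
        exact le_of_mul_le_mul_left h1 hL0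
      rcases Nat.lt_or_ge j (n+1) with h | h
      · exact le_trans hle (ihn j (Nat.lt_succ_iff.mp h))
      · have hje : j = n + 1 := le_antisymm hj h
        rw [hje]
  obtain ⟨Del, hDel⟩ : ∃ D : ℝ, D = (Finset.Icc 1 T).inf' (Finset.nonempty_Icc.mpr hT)
      (fun k => f (x k) + ψ (x k) - (f xstar + ψ xstar)) := ⟨_, rfl⟩
  rw [show (Finset.Icc 1 T).inf' (Finset.nonempty_Icc.mpr hT)
      (fun k => f (x k) + ψ (x k) - (f xstar + ψ xstar)) = Del from hDel.symm]
  have hΔle : ∀ k, 1 ≤ k → k ≤ T → Del ≤ f (x k) + ψ (x k) - (f xstar + ψ xstar) := by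
    intro k h1 h2
    rw [hDel]
    exact Finset.inf'_le _ (Finset.mem_Icc.mpr ⟨h1, h2⟩)
  have hrec : ∀ k, k < T → β (x (k+1)) xstar ≤
      (1 - μ/L) * β (x k) xstar - (Del - δ)/L := by
    intro k hk
    have hkey := key k (mono k hk.le)
    have hΔk := hΔle (k+1) (Nat.succ_le_succ (Nat.zero_le k)) hk
    rw [show (1 - μ/L) * β (x k) xstar - (Del - δ)/L
        = (L * β (x k) xstar - μ * β (x k) xstar - (Del - δ))/L by field_simp]
    rw [le_div_iff₀ hL0]
    linarith
  have unroll : ∀ k, k ≤ T → β (x k) xstar ≤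
      (1 - μ/L)^k * β (x 0) xstar - ((Del - δ)/L) * ∑ j ∈ Finset.range k, (1 - μ/L)^j := by
    intro k
    induction k with
    | zero => intro _; simp
    | succ n ih =>
      intro hn
      have h2 := ih (Nat.le_of_succ_le hn)
      have h1 := hrec n hn
      have h3 : (1 - μ/L) * β (x n) xstar ≤ (1 - μ/L) * ((1 - μ/L)^n * β (x 0) xstar
          - ((Del - δ)/L) * ∑ j ∈ Finset.range n, (1 - μ/L)^j) :=
        mul_le_mul_of_nonneg_left h2 (by linarith)
      rw [geom_sum_succ, pow_succ]
      nlinarith [h1, h3]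
  -- the main estimate
  have hq0 : (0:ℝ) ≤ (1 - μ/L)^T := pow_nonneg (by linarith) T
  have hq1 : (1 - μ/L)^T < 1 := pow_lt_one₀ (by linarith) (by linarith) (by omega)
  have h1q : 0 < 1 - (1 - μ/L)^T := by linarith
  have hrT : 0 ≤ β (x T) xstar := hβnn _ (hxU T) _ hstarSd
  have hTpos : (0:ℝ) < (T:ℝ) := by exact_mod_cast Nat.lt_of_lt_of_le Nat.zero_lt_one hT
  have hsum : ∑ j ∈ Finset.range T, (1 - μ/L)^j = (1 - (1 - μ/L)^T) * (L / μ) := by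
    rw [geom_sum_eq (by intro hcon; rw [sub_eq_self] at hcon; exact hγ0.ne' hcon)]
    field_simp
    rw [show L - μ - L = -μ by ring, div_neg, mul_div_cancel_left₀ _ hμ0.ne']; ring
  have hmain : (Del - δ) * (1 - (1 - μ/L)^T) ≤ (1 - μ/L)^T * μ * β (x 0) xstar := by
    have hu := unroll T le_rfl
    rw [hsum] at hu
    have he1 : (Del - δ)/L * ((1 - (1 - μ/L)^T) * (L / μ))
        = (Del - δ) * (1 - (1 - μ/L)^T) / μ := by
      field_simp
    rw [he1] at hu
    have h5 : (Del - δ) * (1 - (1 - μ/L)^T) / μ ≤ (1 - μ/L)^T * β (x 0) xstar := by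
      linarith
    have h6 := (div_le_iff₀ hμ0).mp h5
    nlinarith [h6]
  have hEx : μ/L * (T:ℝ) + 1 ≤ Real.exp (μ/L * T) := by
    linarith [Real.add_one_le_exp (μ/L * T)]
  have hEx1 : 0 < Real.exp (μ/L * T) - 1 := by nlinarith [mul_pos hγ0 hTpos]
  refine ⟨?_, ?_, ?_⟩
  · rw [show (1 - μ/L)^T * μ / (1 - (1 - μ/L)^T) * β (x 0) xstar
        = ((1 - μ/L)^T * μ * β (x 0) xstar) / (1 - (1 - μ/L)^T) by ring]
    rw [← sub_le_iff_le_add', le_div_iff₀ h1q]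
    nlinarith [hmain]
  · have hqE : (1 - μ/L)^T * Real.exp (μ/L * T) ≤ 1 := by
      rw [mul_comm (μ/L) (T:ℝ), Real.exp_nat_mul, ← mul_pow]
      have hg : (1 - μ/L) * Real.exp (μ/L) ≤ 1 := by
        have h1 := Real.add_one_le_exp (-(μ/L))
        have h2 : Real.exp (-(μ/L)) * Real.exp (μ/L) = 1 := by
          rw [← Real.exp_add]; simp
        nlinarith [Real.exp_pos (μ/L)]
      calc ((1 - μ/L) * Real.exp (μ/L))^T ≤ 1^T :=
            pow_le_pow_left₀ (mul_nonneg (by linarith) (Real.exp_pos _).le) hg T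
        _ = 1 := one_pow T
    have hkey2 : (1 - μ/L)^T * μ / (1 - (1 - μ/L)^T) ≤ μ / (Real.exp (μ/L * T) - 1) := by
      rw [div_le_div_iff₀ h1q hEx1]
      nlinarith [mul_le_mul_of_nonneg_left hqE hμ0.le]
    have h7 := mul_le_mul_of_nonneg_right hkey2 hr0
    linarith
  · have hb : μ/L * T ≤ Real.exp (μ/L*T) - 1 := by linarith
    have hbpos : 0 < μ/L * T := mul_pos hγ0 hTpos
    have h3 : μ / (Real.exp (μ/L * T) - 1) ≤ L / T := by
      have h4 : μ / (Real.exp (μ/L*T) - 1) ≤ μ / (μ/L * T) :=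
        div_le_div_of_nonneg_left hμ0.le hbpos hb
      have h5 : μ / (μ/L * T) = L / T := by
        rw [div_eq_div_iff (by positivity : (0:ℝ) < μ/L * T).ne' hTpos.ne']
        field_simp
      linarith
    have h8 := mul_le_mul_of_nonneg_right h3 hr0
    linarith
end

section
/- Assume d is strongly convex with convexity parameter one, i.e. d(y) ≥ d(x) + ⟨∇d(x), y − x⟩ + ½‖y − x‖² for x ∈ int(dom d), y ∈ dom d. Then for any L > 0 the map s ↦ y*_L(s) is Lipschitz continuous: ‖y*_L(s_1) − y*_L(s_2)‖ ≤ (1/L)‖s_1 − s_2‖_* for all s_1, s_2 ∈ E*; consequently Φ_L is differentiable with ∇Φ_L(s) = y*_L(s) and ‖∇Φ_L(s_1) − ∇Φ_L(s_2)‖ ≤ (1/L)‖s_1 − s_2‖_*. -/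
/-- Lemma `lm-Lip` of "Gradient Methods with Memory".

If `d` is strongly convex with convexity parameter one, then for any `L > 0` the map
`s ↦ y*_L(s)` is `(1/L)`-Lipschitz from `(E*, ‖·‖_*)` to `(E, ‖·‖)`; consequently `Φ_L`
is differentiable with `∇Φ_L(s) = y*_L(s)` and `∇Φ_L` is `(1/L)`-Lipschitz. -/
theorem gmm_lm_Lip
    {E : Type*} [NormedAddCommGroup E] [NormedSpace ℝ E] [FiniteDimensional ℝ E]
    -- `Sd = dom d`, `S = dom ψ`
    (Sd S : Set E) (hSSd : S ⊆ Sd) (hSconv : Convex ℝ S)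
    (d ψ : E → ℝ) (d' : E → E →L[ℝ] ℝ)
    (hd' : ∀ x ∈ interior Sd, HasFDerivAt d (d' x) x)
    -- `d` is strongly convex with convexity parameter one
    (hstrong : ∀ x ∈ interior Sd, ∀ y ∈ Sd,
      d x + (d' x) (y - x) + (1 / 2) * ‖y - x‖ ^ 2 ≤ d y)
    (hψconv : ConvexOn ℝ S ψ)
    (L : ℝ) (hL : 0 < L)
    -- `Φ = Φ_L` with maximizer `ystar = y*_L(·)`
    (Φ : (E →L[ℝ] ℝ) → ℝ) (ystar : (E →L[ℝ] ℝ) → E)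
    (hy : ∀ s : E →L[ℝ] ℝ, ystar s ∈ S ∧ ystar s ∈ interior Sd ∧
      Φ s = s (ystar s) - L * d (ystar s) - ψ (ystar s) ∧
      ∀ y ∈ S, s y - L * d y - ψ y ≤ Φ s) :
    (∀ s₁ s₂ : E →L[ℝ] ℝ, ‖ystar s₁ - ystar s₂‖ ≤ (1 / L) * ‖s₁ - s₂‖) ∧
    (∀ s : E →L[ℝ] ℝ, HasFDerivAt Φ (ContinuousLinearMap.apply ℝ ℝ (ystar s)) s) ∧
    (∀ s₁ s₂ : E →L[ℝ] ℝ,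
      ‖ContinuousLinearMap.apply ℝ ℝ (ystar s₁) - ContinuousLinearMap.apply ℝ ℝ (ystar s₂)‖
        ≤ (1 / L) * ‖s₁ - s₂‖) := by
  -- Variational inequality at the maximizer
  have VI : ∀ s : E →L[ℝ] ℝ, ∀ y ∈ S,
      s (y - ystar s) ≤ L * (d' (ystar s)) (y - ystar s) + (ψ y - ψ (ystar s)) := by
    intro s y hyS
    obtain ⟨hS, hInt, hΦeq, hmax⟩ := hy s
    set x := ystar s with hx
    set v := y - x with hv
    -- derivative of t ↦ d (x + t • v) at 0
    have hg : HasDerivAt (fun t : ℝ => x + t • v) v 0 := by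
      simpa using ((hasDerivAt_id (0:ℝ)).smul_const v).const_add x
    have hder : HasDerivAt (fun t : ℝ => d (x + t • v)) ((d' x) v) 0 := by
      have hf : HasFDerivAt d (d' x) ((fun t : ℝ => x + t • v) 0) := by
        simpa using hd' x hInt
      exact hf.comp_hasDerivAt 0 hg
    have hslope : Filter.Tendsto (fun t : ℝ => L * ((d (x + t • v) - d x) / t))
        (nhdsWithin 0 (Set.Ioi 0)) (nhds (L * (d' x) v)) := by
      have h1 := (hasDerivAt_iff_tendsto_slope.mp hder)
      have h2 : Filter.Tendsto (slope (fun t : ℝ => d (x + t • v)) 0)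
          (nhdsWithin 0 (Set.Ioi 0)) (nhds ((d' x) v)) :=
        h1.mono_left (nhdsWithin_mono 0 (fun t ht => ne_of_gt ht))
      have := h2.const_mul L
      refine this.congr (fun t => ?_)
      simp [slope_def_field, div_eq_inv_mul, mul_comm]
    have hbound : ∀ᶠ t in nhdsWithin (0:ℝ) (Set.Ioi 0),
        s v - (ψ y - ψ x) ≤ L * ((d (x + t • v) - d x) / t) := by
      filter_upwards [Ioo_mem_nhdsGT_of_mem (by norm_num : (0:ℝ) ∈ Set.Ico 0 1)]
        with t ht
      obtain ⟨ht0, ht1⟩ := ht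
      have hz : x + t • v ∈ S := by
        have := hSconv hS hyS (by linarith : (0:ℝ) ≤ 1 - t) (le_of_lt ht0)
          (by ring : (1 - t) + t = 1)
        have he : (1 - t) • x + t • y = x + t • v := by
          simp [hv, smul_sub, sub_smul]; abel
        rwa [he] at this
      have hψz : ψ (x + t • v) ≤ (1 - t) * ψ x + t * ψ y := by
        have := hψconv.2 hS hyS (by linarith : (0:ℝ) ≤ 1 - t) (le_of_lt ht0)
          (by ring : (1 - t) + t = 1)
        have he : (1 - t) • x + t • y = x + t • v := by
          simp [hv, smul_sub, sub_smul]; abel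
        rw [he] at this
        simpa [smul_eq_mul] using this
      have hm := hmax (x + t • v) hz
      rw [hΦeq] at hm
      have hsv : s (x + t • v) = s x + t * s v := by
        simp [map_add, map_smul]
      rw [hsv] at hm
      -- t * s v ≤ L * (d (x+t•v) - d x) + t * (ψ y - ψ x)
      have key : t * s v ≤ L * (d (x + t • v) - d x) + t * (ψ y - ψ x) := by
        nlinarith [hψz, hm]
      have h5 : (s v - (ψ y - ψ x)) * t ≤ L * (d (x + t • v) - d x) := by nlinarith [key]
      have h6 := (le_div_iff₀ ht0).mpr h5
      rw [mul_div_assoc] at h6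
      linarith
    have hfin : s v - (ψ y - ψ x) ≤ L * (d' x) v := ge_of_tendsto hslope hbound
    linarith
  -- Part 1: Lipschitz continuity of ystar
  have part1 : ∀ s₁ s₂ : E →L[ℝ] ℝ, ‖ystar s₁ - ystar s₂‖ ≤ (1 / L) * ‖s₁ - s₂‖ := by
    intro s₁ s₂
    obtain ⟨h1S, h1I, -, -⟩ := hy s₁
    obtain ⟨h2S, h2I, -, -⟩ := hy s₂
    set y₁ := ystar s₁
    set y₂ := ystar s₂
    have A := VI s₁ y₂ h2S
    have B := VI s₂ y₁ h1S
    have C := hstrong y₁ h1I y₂ (hSSd h2S)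
    have D := hstrong y₂ h2I y₁ (hSSd h1S)
    -- key: L‖y₁-y₂‖² ≤ (s₁-s₂)(y₁-y₂)
    have key : L * ‖y₁ - y₂‖ ^ 2 ≤ (s₁ - s₂) (y₁ - y₂) := by
      have hdd : (d' y₁) (y₂ - y₁) + (d' y₂) (y₁ - y₂) ≤ -‖y₁ - y₂‖ ^ 2 := by
        have hnorm : ‖y₂ - y₁‖ = ‖y₁ - y₂‖ := norm_sub_rev _ _
        have hnorm2 : ‖y₂ - y₁‖ ^ 2 = ‖y₁ - y₂‖ ^ 2 := by rw [hnorm]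
        linarith [C, D]
      have hs : (s₁ - s₂) (y₁ - y₂) = s₁ (y₁ - y₂) - s₂ (y₁ - y₂) := by simp
      have hs1 : s₁ (y₂ - y₁) = - s₁ (y₁ - y₂) := by
        rw [← map_neg]; congr 1; abel
      have hs2 : s₂ (y₁ - y₂) = - s₂ (y₂ - y₁) := by
        rw [← map_neg]; congr 1; abel
      nlinarith [A, B, mul_le_mul_of_nonneg_left hdd (le_of_lt hL)]
    rcases eq_or_ne y₁ y₂ with h | h
    · have hz : y₁ - y₂ = 0 := sub_eq_zero_of_eq h
      rw [hz, norm_zero]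
      positivity
    · have hpos : 0 < ‖y₁ - y₂‖ := by
        rw [norm_pos_iff, sub_ne_zero]; exact h
      have hdual : (s₁ - s₂) (y₁ - y₂) ≤ ‖s₁ - s₂‖ * ‖y₁ - y₂‖ := by
        calc (s₁ - s₂) (y₁ - y₂) ≤ ‖(s₁ - s₂) (y₁ - y₂)‖ := le_abs_self _
        _ ≤ ‖s₁ - s₂‖ * ‖y₁ - y₂‖ := (s₁ - s₂).le_opNorm _
      have : L * ‖y₁ - y₂‖ ^ 2 ≤ ‖s₁ - s₂‖ * ‖y₁ - y₂‖ := le_trans key hdual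
      rw [one_div, inv_mul_eq_div, le_div_iff₀ hL]
      nlinarith
  refine ⟨part1, ?_, ?_⟩
  · -- differentiability of Φ
    intro s
    rw [hasFDerivAt_iff_isLittleO_nhds_zero]
    rw [Asymptotics.isLittleO_iff]
    intro c hc
    have hball : Metric.ball (0 : E →L[ℝ] ℝ) (c * L) ∈ nhds (0 : E →L[ℝ] ℝ) :=
      Metric.ball_mem_nhds _ (by positivity)
    filter_upwards [hball] with h hh
    rw [Metric.mem_ball, dist_zero_right] at hh
    obtain ⟨hS, hI, hΦeq, hmax⟩ := hy s
    obtain ⟨hS', hI', hΦeq', hmax'⟩ := hy (s + h)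
    set y := ystar s
    set y' := ystar (s + h)
    have hlow : Φ s + h y ≤ Φ (s + h) := by
      have h1 := hmax' y hS
      have h2 : (s + h) y = s y + h y := by simp
      rw [hΦeq]
      linarith [h2 ▸ h1]
    have hup : Φ (s + h) ≤ Φ s + h y' := by
      have h1 := hmax y' hS'
      have h2 : (s + h) y' = s y' + h y' := by simp
      rw [hΦeq', h2]
      linarith
    have herr : ‖Φ (s + h) - Φ s - (ContinuousLinearMap.apply ℝ ℝ (ystar s)) h‖
        ≤ (1 / L) * ‖h‖ * ‖h‖ := by
      have happ : (ContinuousLinearMap.apply ℝ ℝ (ystar s)) h = h y := rfl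
      rw [happ, Real.norm_eq_abs, abs_le]
      constructor
      · have hpos : 0 ≤ 1 / L * ‖h‖ * ‖h‖ := by positivity
        linarith
      · have h1 : Φ (s + h) - Φ s - h y ≤ h (y' - y) := by
          have : h (y' - y) = h y' - h y := by simp
          linarith [hup, this.ge]
        have h2 : h (y' - y) ≤ ‖h‖ * ‖y' - y‖ := by
          calc h (y' - y) ≤ ‖h (y' - y)‖ := le_abs_self _
          _ ≤ ‖h‖ * ‖y' - y‖ := h.le_opNorm _
        have h3 : ‖y' - y‖ ≤ (1 / L) * ‖h‖ := by
          have := part1 (s + h) s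
          simpa using this
        nlinarith [norm_nonneg h]
    calc ‖Φ (s + h) - Φ s - (ContinuousLinearMap.apply ℝ ℝ (ystar s)) h‖
        ≤ (1 / L) * ‖h‖ * ‖h‖ := herr
      _ ≤ c * ‖h‖ := by
          rcases eq_or_lt_of_le (norm_nonneg h) with h0 | h0
          · rw [← h0]; simp
          · have : (1 / L) * ‖h‖ ≤ c := by
              rw [div_mul_eq_mul_div, div_le_iff₀ hL]
              nlinarith
            nlinarith
  · -- Lipschitz for apply maps
    intro s₁ s₂
    have heq : ContinuousLinearMap.apply ℝ ℝ (ystar s₁) - ContinuousLinearMap.apply ℝ ℝ (ystar s₂)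
        = ContinuousLinearMap.apply ℝ ℝ (ystar s₁ - ystar s₂) := by
      rw [map_sub]
    rw [heq]
    have hn : ‖ContinuousLinearMap.apply ℝ ℝ (ystar s₁ - ystar s₂)‖ ≤ ‖ystar s₁ - ystar s₂‖ := by
      apply ContinuousLinearMap.opNorm_le_bound _ (norm_nonneg _)
      intro t
      rw [mul_comm]
      exact t.le_opNorm _
    exact le_trans hn (part1 s₁ s₂)
end

section
/- Assume d is strongly convex with convexity parameter one, i.e. d(y) ≥ d(x) + ⟨∇d(x), y − x⟩ + ½‖y − x‖² for x ∈ int(dom d), y ∈ dom d. Then the gradient of the anti-dual objective, given by ∇ξ_L(λ) = f_* − Gᵀ y*_L(L∇d(x̄) − Gλ), is Lipschitz continuous on Δ_m with respect to the ℓ₁-norm on arguments and ℓ∞-norm on gradients, with constant (1/L) max_{1≤i≤m} ‖g_i‖_*²: for all λ_1, λ_2 ∈ Δ_m, ‖∇ξ_L(λ_1) − ∇ξ_L(λ_2)‖_∞ ≤ (1/L) max_{1≤i≤m} ‖g_i‖_*² · ‖λ_1 − λ_2‖_1. -/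
/-- First-order optimality condition for the prox subproblem. -/
theorem gmm_foc
    {E : Type*} [NormedAddCommGroup E] [NormedSpace ℝ E]
    (Sd S : Set E) (hSconv : Convex ℝ S)
    (d ψ : E → ℝ) (d' : E → E →L[ℝ] ℝ)
    (hd' : ∀ x ∈ interior Sd, HasFDerivAt d (d' x) x)
    (hψconv : ConvexOn ℝ S ψ)
    (L : ℝ) (hL : 0 < L)
    (s : E →L[ℝ] ℝ) (y₀ : E) (hy₀S : y₀ ∈ S) (hy₀int : y₀ ∈ interior Sd)
    (hopt : ∀ y ∈ S, s y - L * d y - ψ y ≤ s y₀ - L * d y₀ - ψ y₀)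
    (y : E) (hyS : y ∈ S) :
    s (y - y₀) - (ψ y - ψ y₀) ≤ L * (d' y₀) (y - y₀) := by
  set v := y - y₀ with hv
  -- derivative of g t = d (y₀ + t • v) at 0 is d' y₀ v
  have hg : HasDerivAt (fun t : ℝ => d (y₀ + t • v)) ((d' y₀) v) 0 := by
    have hin : HasDerivAt (fun t : ℝ => y₀ + t • v) v 0 := by
      simpa using ((hasDerivAt_id (0:ℝ)).smul_const v).const_add y₀
    have h0 : y₀ + (0:ℝ) • v = y₀ := by simp
    have hout : HasFDerivAt d (d' y₀) (y₀ + (0:ℝ) • v) := h0.symm ▸ hd' y₀ hy₀int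
    have := hout.comp_hasDerivAt 0 hin
    exact this
  have hslope : Filter.Tendsto (slope (fun t : ℝ => d (y₀ + t • v)) 0)
      (nhdsWithin 0 (Set.Ioi 0)) (nhds ((d' y₀) v)) := by
    have := hasDerivAt_iff_tendsto_slope.mp hg
    exact this.mono_left (nhdsWithin_mono _ (fun t ht => ne_of_gt ht))
  have hev : ∀ᶠ t in nhdsWithin (0:ℝ) (Set.Ioi 0),
      (s v - (ψ y - ψ y₀)) / L ≤ slope (fun t : ℝ => d (y₀ + t • v)) 0 t := by
    filter_upwards [Ioc_mem_nhdsGT_of_mem (Set.left_mem_Ico.2 one_pos)] with t ht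
    obtain ⟨ht0, ht1⟩ := ht
    have hzS : y₀ + t • v ∈ S := by
      have := hSconv hy₀S hyS (by linarith : (0:ℝ) ≤ 1 - t) (le_of_lt ht0) (by ring)
      have heq : y₀ + t • v = (1 - t) • y₀ + t • y := by rw [hv]; module
      rwa [heq]
    have hopt' := hopt _ hzS
    have hψ : ψ (y₀ + t • v) ≤ (1 - t) * ψ y₀ + t * ψ y := by
      have := hψconv.2 hy₀S hyS (by linarith : (0:ℝ) ≤ 1 - t) (le_of_lt ht0) (by ring)
      have heq : y₀ + t • v = (1 - t) • y₀ + t • y := by rw [hv]; module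
      rw [heq]
      simpa [smul_eq_mul] using this
    have hs : s (y₀ + t • v) = s y₀ + t * s v := by
      simp [map_add, map_smul, smul_eq_mul]
    have hkey : t * (s v - (ψ y - ψ y₀)) ≤ L * (d (y₀ + t • v) - d y₀) := by
      nlinarith [hopt', hψ, hs]
    rw [slope_def_field]
    simp only [zero_smul, add_zero, sub_zero]
    rw [div_le_div_iff₀ hL ht0]
    nlinarith [hkey]
  have := ge_of_tendsto hslope hev
  have hL' : (s v - (ψ y - ψ y₀)) / L ≤ (d' y₀) v := this
  rw [div_le_iff₀ hL] at hL'
  linarith [hL']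

set_option maxHeartbeats 1000000 in
/-- eq. `def-LipGX` of "Gradient Methods with Memory".

If `d` is strongly convex with convexity parameter one, then the gradient of the anti-dual
objective, `∇ξ_L(λ) = f_* − Gᵀ y*_L(L∇d(x̄) − Gλ)`, is Lipschitz continuous on `Δ_m`
(ℓ₁-norm on arguments, ℓ∞-norm on gradients) with constant `(1/L) max_i ‖g_i‖_*²`. -/
theorem gmm_def_LipGX
    {E : Type*} [NormedAddCommGroup E] [NormedSpace ℝ E] [FiniteDimensional ℝ E]
    -- `Sd = dom d`, `S = dom ψ`
    (Sd S : Set E) (hSSd : S ⊆ Sd) (hSconv : Convex ℝ S)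
    (d ψ : E → ℝ) (d' : E → E →L[ℝ] ℝ)
    (hd' : ∀ x ∈ interior Sd, HasFDerivAt d (d' x) x)
    -- `d` is strongly convex with convexity parameter one
    (hstrong : ∀ x ∈ interior Sd, ∀ y ∈ Sd,
      d x + (d' x) (y - x) + (1 / 2) * ‖y - x‖ ^ 2 ≤ d y)
    (hψconv : ConvexOn ℝ S ψ)
    (L : ℝ) (hL : 0 < L)
    -- `ystar = y*_L(·)`, the maximizer defining `Φ_L`
    (ystar : (E →L[ℝ] ℝ) → E)
    (hy : ∀ s : E →L[ℝ] ℝ, ystar s ∈ S ∧ ystar s ∈ interior Sd ∧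
      ∀ y ∈ S, s y - L * d y - ψ y ≤ s (ystar s) - L * d (ystar s) - ψ (ystar s))
    -- the bundle data: `f_i = f(z_i)`, `g_i = ∇f(z_i)`
    (m : ℕ) (hm : 0 < m)
    (f : E → ℝ) (f' : E → E →L[ℝ] ℝ) (hf' : ∀ x : E, HasFDerivAt f (f' x) x)
    (hfconv : ConvexOn ℝ Set.univ f)
    (z : Fin m → E) (hzS : ∀ i, z i ∈ S)
    (xbar : E) (hxbar : xbar ∈ interior S) :
    ∀ lam₁ ∈ stdSimplex ℝ (Fin m), ∀ lam₂ ∈ stdSimplex ℝ (Fin m),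
      (⨆ i : Fin m,
        |((f' (z i)) (z i) - f (z i)
            - (f' (z i)) (ystar (L • d' xbar - ∑ j, lam₁ j • f' (z j)))) -
          ((f' (z i)) (z i) - f (z i)
            - (f' (z i)) (ystar (L • d' xbar - ∑ j, lam₂ j • f' (z j))))|) ≤
      (1 / L) * (⨆ i : Fin m, ‖f' (z i)‖ ^ 2) * ∑ i, |lam₁ i - lam₂ i| := by
  intro lam₁ _ lam₂ _
  haveI : Nonempty (Fin m) := ⟨⟨0, hm⟩⟩
  set s₁ : E →L[ℝ] ℝ := L • d' xbar - ∑ j, lam₁ j • f' (z j) with hs₁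
  set s₂ : E →L[ℝ] ℝ := L • d' xbar - ∑ j, lam₂ j • f' (z j) with hs₂
  clear_value s₁ s₂
  obtain ⟨hy₁S, hy₁int, hopt₁⟩ := hy s₁
  obtain ⟨hy₂S, hy₂int, hopt₂⟩ := hy s₂
  set y₁ := ystar s₁ with hy₁
  set y₂ := ystar s₂ with hy₂
  clear_value y₁ y₂
  -- strong monotonicity
  have key : L * ‖y₂ - y₁‖ ^ 2 ≤ (s₂ - s₁) (y₂ - y₁) := by
    have h1 := gmm_foc Sd S hSconv d ψ d' hd' hψconv L hL s₁ y₁ hy₁S hy₁int hopt₁ y₂ hy₂S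
    have h2 := gmm_foc Sd S hSconv d ψ d' hd' hψconv L hL s₂ y₂ hy₂S hy₂int hopt₂ y₁ hy₁S
    have sc1 := hstrong y₁ hy₁int y₂ (hSSd hy₂S)
    have sc2 := hstrong y₂ hy₂int y₁ (hSSd hy₁S)
    have hnrm : ‖y₁ - y₂‖ = ‖y₂ - y₁‖ := norm_sub_rev _ _
    have e1 : s₂ (y₁ - y₂) = s₂ y₁ - s₂ y₂ := map_sub _ _ _
    have e2 : s₁ (y₂ - y₁) = s₁ y₂ - s₁ y₁ := map_sub _ _ _
    have e3 : (s₂ - s₁) (y₂ - y₁) = (s₂ y₂ - s₂ y₁) - (s₁ y₂ - s₁ y₁) := by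
      simp only [ContinuousLinearMap.sub_apply, map_sub]
      ring
    rw [hnrm] at sc2
    rw [e1] at h2
    rw [e2] at h1
    rw [e3]
    nlinarith [sc1, sc2, h1, h2]
  have hdist : ‖y₂ - y₁‖ ≤ (1 / L) * ‖s₂ - s₁‖ := by
    rcases eq_or_ne y₂ y₁ with h | h
    · simp [h]
      positivity
    · have hpos : 0 < ‖y₂ - y₁‖ := norm_sub_pos_iff.mpr h
      have hb : (s₂ - s₁) (y₂ - y₁) ≤ ‖s₂ - s₁‖ * ‖y₂ - y₁‖ :=
        le_trans (le_abs_self _) ((s₂ - s₁).le_opNorm _)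
      rw [div_mul_eq_mul_div, le_div_iff₀ hL]
      nlinarith [key, hb, hpos]
  set M : ℝ := ⨆ i : Fin m, ‖f' (z i)‖ with hM
  have hMb : ∀ i : Fin m, ‖f' (z i)‖ ≤ M := fun i =>
    le_ciSup (f := fun i : Fin m => ‖f' (z i)‖) (Set.Finite.bddAbove (Set.finite_range _)) i
  have hM0 : 0 ≤ M := le_trans (norm_nonneg _) (hMb ⟨0, hm⟩)
  have hsnorm : ‖s₂ - s₁‖ ≤ M * ∑ i, |lam₁ i - lam₂ i| := by
    have hdiff : s₂ - s₁ = ∑ j, (lam₁ j - lam₂ j) • f' (z j) := by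
      have e : (∑ j, (lam₁ j - lam₂ j) • f' (z j))
          = ∑ j, lam₁ j • f' (z j) - ∑ j, lam₂ j • f' (z j) := by
        rw [← Finset.sum_sub_distrib]
        exact Finset.sum_congr rfl fun j _ => by
          ext x
          simp only [ContinuousLinearMap.smul_apply, ContinuousLinearMap.sub_apply, smul_eq_mul]
          ring
      rw [hs₁, hs₂, e]
      abel
    rw [hdiff]
    calc ‖∑ j, (lam₁ j - lam₂ j) • f' (z j)‖
        ≤ ∑ j, ‖(lam₁ j - lam₂ j) • f' (z j)‖ := norm_sum_le _ _
      _ ≤ ∑ j, |lam₁ j - lam₂ j| * M := by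
          apply Finset.sum_le_sum
          intro j _
          calc ‖(lam₁ j - lam₂ j) • f' (z j)‖
              = |lam₁ j - lam₂ j| * ‖f' (z j)‖ := by
                have := norm_smul (lam₁ j - lam₂ j) (f' (z j))
                rwa [Real.norm_eq_abs] at this
            _ ≤ |lam₁ j - lam₂ j| * M :=
                mul_le_mul_of_nonneg_left (hMb j) (abs_nonneg _)
      _ = M * ∑ i, |lam₁ i - lam₂ i| := by rw [← Finset.sum_mul, mul_comm]
  have hsum0 : 0 ≤ ∑ i, |lam₁ i - lam₂ i| :=
    Finset.sum_nonneg fun i _ => abs_nonneg _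
  have hMsq : M ^ 2 ≤ ⨆ i : Fin m, ‖f' (z i)‖ ^ 2 := by
    obtain ⟨i₀, hi₀⟩ := exists_eq_ciSup_of_finite (f := fun i : Fin m => ‖f' (z i)‖)
    rw [← hM] at hi₀
    calc M ^ 2 = ‖f' (z i₀)‖ ^ 2 := by rw [hi₀]
      _ ≤ ⨆ i : Fin m, ‖f' (z i)‖ ^ 2 :=
          le_ciSup (f := fun i : Fin m => ‖f' (z i)‖ ^ 2)
            (Set.Finite.bddAbove (Set.finite_range _)) i₀
  apply ciSup_le
  intro i
  have hterm : ((f' (z i)) (z i) - f (z i) - (f' (z i)) y₁) -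
      ((f' (z i)) (z i) - f (z i) - (f' (z i)) y₂) = (f' (z i)) (y₂ - y₁) := by
    rw [map_sub]; ring
  rw [hterm]
  calc |(f' (z i)) (y₂ - y₁)|
      ≤ ‖f' (z i)‖ * ‖y₂ - y₁‖ := (f' (z i)).le_opNorm _
    _ ≤ M * ((1 / L) * (M * ∑ j, |lam₁ j - lam₂ j|)) := by
        apply mul_le_mul (hMb i) _ (norm_nonneg _) hM0
        calc ‖y₂ - y₁‖ ≤ (1 / L) * ‖s₂ - s₁‖ := hdist
          _ ≤ (1 / L) * (M * ∑ j, |lam₁ j - lam₂ j|) := by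
              apply mul_le_mul_of_nonneg_left hsnorm (by positivity)
    _ = M ^ 2 * ((1 / L) * ∑ j, |lam₁ j - lam₂ j|) := by ring
    _ ≤ (⨆ i : Fin m, ‖f' (z i)‖ ^ 2) * ((1 / L) * ∑ j, |lam₁ j - lam₂ j|) := by
        apply mul_le_mul_of_nonneg_right hMsq (by positivity)
    _ = (1 / L) * (⨆ i : Fin m, ‖f' (z i)‖ ^ 2) * ∑ i, |lam₁ i - lam₂ i| := by ring
end
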